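/- arXiv:1706.03045 — 3 statements merged into one kernel-verified Lean document; each statement's English description precedes it below -/
import Mathlib

section
/- For every cube Q ⊂ Q₀, every s ∈ (0,1), every c ∈ ℝ, every f ∈ L¹(Q₀), and every λ > 0 one has |{y ∈ Q : M^#_{s,Q} f(y) > λ}| ≤ (4ⁿ/s) |{y ∈ Q : |f(y) − c| > λ}|. -/
open MeasureTheory ENNReal NNReal Set Filter

noncomputable section

/-- An axis-parallel cube in `ℝⁿ` (modeled as `Fin n → ℝ`), given by its lower-left
corner and (positive) side length. -/
structure Cube (n : ℕ) where
  corner : Fin n → ℝ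
  side : ℝ
  side_pos : 0 < side

namespace Cube

/-- The underlying set of a cube. -/
def set {n : ℕ} (Q : Cube n) : Set (Fin n → ℝ) :=
  Set.Icc Q.corner fun i => Q.corner i + Q.side

/-- The volume `|Q|` of a cube, as an extended nonnegative real. -/
def vol {n : ℕ} (Q : Cube n) : ℝ≥0∞ :=
  volume Q.set

end Cube

variable {n : ℕ}

/-- The mean value `f_Q = (1/|Q|) ∫_Q f`. -/
def cubeAvg (f : (Fin n → ℝ) → ℝ) (Q : Cube n) : ℝ :=
  (∫ x in Q.set, f x) / (volume Q.set).toReal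

/-- `(1/|Q|) ∫_Q ∫_Q |f x - f y| dx dy`, as an extended nonnegative real. -/
def dblOsc (f : (Fin n → ℝ) → ℝ) (Q : Cube n) : ℝ≥0∞ :=
  (∫⁻ x in Q.set, ∫⁻ y in Q.set, ENNReal.ofReal |f x - f y|) / Q.vol

/-- `(1/|Q|) ∫_Q |f - f_Q|`, as an extended nonnegative real. -/
def oscAvg (f : (Fin n → ℝ) → ℝ) (Q : Cube n) : ℝ≥0∞ :=
  (∫⁻ x in Q.set, ENNReal.ofReal |f x - cubeAvg f Q|) / Q.vol

/-- A packing of `Q₀`: a countable family of subcubes of `Q₀` with pairwise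
disjoint interiors. -/
def IsPacking (Q₀ : Cube n) (π : Set (Cube n)) : Prop :=
  π.Countable ∧ (∀ Q ∈ π, Q.set ⊆ Q₀.set) ∧
    π.Pairwise fun Q Q' => Disjoint (interior Q.set) (interior Q'.set)

/-- `γ ∈ Γ_f`: `γ` is integrable on `Q₀` and for every packing `{Qᵢ}` of `Q₀`,
`Σᵢ (1/|Qᵢ|) ∫_{Qᵢ}∫_{Qᵢ} |f x - f y| ≤ Σᵢ ∫_{Qᵢ} γ`. -/
def MemGamma (Q₀ : Cube n) (f γ : (Fin n → ℝ) → ℝ) : Prop :=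
  IntegrableOn γ Q₀.set volume ∧
    ∀ π : Set (Cube n), IsPacking Q₀ π →
      ∑' Q : π, dblOsc f (Q : Cube n) ≤
        ∑' Q : π, ENNReal.ofReal (∫ x in (Q : Cube n).set, γ x)

/-- The subcubes of `Q₀` containing the point `x`. -/
def subcubesAt (Q₀ : Cube n) (x : Fin n → ℝ) : Set (Cube n) :=
  {Q | Q.set ⊆ Q₀.set ∧ x ∈ Q.set}

/-- The sharp maximal function `f^#_{Q₀}(x) = sup_{Q₀ ⊇ Q ∋ x} (1/|Q|) ∫_Q |f - f_Q|`. -/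
def sharpMax (Q₀ : Cube n) (f : (Fin n → ℝ) → ℝ) (x : Fin n → ℝ) : ℝ≥0∞ :=
  ⨆ Q ∈ subcubesAt Q₀ x, oscAvg f Q

/-- Hardy–Littlewood maximal function of an `ℝ≥0∞`-valued function. -/
def hlMaxE (Q₀ : Cube n) (g : (Fin n → ℝ) → ℝ≥0∞) (x : Fin n → ℝ) : ℝ≥0∞ :=
  ⨆ Q ∈ subcubesAt Q₀ x, (∫⁻ y in Q.set, g y) / Q.vol

/-- Hardy–Littlewood maximal function `M_{Q₀} g (x) = sup_{Q₀ ⊇ Q ∋ x} (1/|Q|) ∫_Q |g|`. -/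
def hlMax (Q₀ : Cube n) (g : (Fin n → ℝ) → ℝ) (x : Fin n → ℝ) : ℝ≥0∞ :=
  hlMaxE Q₀ (fun y => ENNReal.ofReal |g y|) x

/-- `inf_{c ∈ ℝ} inf {α ≥ 0 : |{y ∈ Q : |f y - c| > α}| < s |Q|}`. -/
def oscS (s : ℝ) (f : (Fin n → ℝ) → ℝ) (Q : Cube n) : ℝ≥0∞ :=
  ⨅ c : ℝ,
    sInf {a : ℝ≥0∞ | volume {y ∈ Q.set | a < ENNReal.ofReal |f y - c|} < ENNReal.ofReal s * Q.vol}

/-- The Strömberg–Jawerth–Torchinsky local maximal function `M^#_{s,Q₀} f`. -/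
def locSharpMax (s : ℝ) (Q₀ : Cube n) (f : (Fin n → ℝ) → ℝ) (x : Fin n → ℝ) : ℝ≥0∞ :=
  ⨆ Q ∈ subcubesAt Q₀ x, oscS s f Q

/-- The decreasing rearrangement (on `(0,1)`, extended-real-valued) of an
`ℝ≥0∞`-valued function on `Q₀`. -/
def rearr (Q₀ : Cube n) (g : (Fin n → ℝ) → ℝ≥0∞) (t : ℝ) : ℝ≥0∞ :=
  sInf {a : ℝ≥0∞ | volume {x ∈ Q₀.set | a < g x} ≤ ENNReal.ofReal t}

/-- The decreasing rearrangement `f*` of a real function on `Q₀`. -/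
def rearrF (Q₀ : Cube n) (f : (Fin n → ℝ) → ℝ) : ℝ → ℝ≥0∞ :=
  rearr Q₀ fun x => ENNReal.ofReal |f x|

/-- A rearrangement invariant (Banach function) space, described through its
representation space on `(0,1)`: an extended-real-valued function norm `N` on
(`ℝ≥0∞`-valued) functions on `(0,1)` which is rearrangement invariant, has the
Fatou property, contains `L^∞(0,1)` and embeds into `L¹(0,1)`. -/
structure RISpace where
  N : (ℝ → ℝ≥0∞) → ℝ≥0∞
  add_le : ∀ f g : ℝ → ℝ≥0∞, Measurable f → Measurable g → N (f + g) ≤ N f + N g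
  smul_eq : ∀ (c : ℝ≥0) (f : ℝ → ℝ≥0∞), N (fun t => (c : ℝ≥0∞) * f t) = (c : ℝ≥0∞) * N f
  mono : ∀ f g : ℝ → ℝ≥0∞, (∀ᵐ t ∂volume.restrict (Set.Ioo (0:ℝ) 1), f t ≤ g t) → N f ≤ N g
  rearr_inv : ∀ f g : ℝ → ℝ≥0∞, Measurable f → Measurable g →
    (∀ a : ℝ≥0∞, volume {t ∈ Set.Ioo (0:ℝ) 1 | a < f t} = volume {t ∈ Set.Ioo (0:ℝ) 1 | a < g t}) →
    N f = N g
  eq_zero_iff : ∀ f : ℝ → ℝ≥0∞, Measurable f →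
    (N f = 0 ↔ f =ᵐ[volume.restrict (Set.Ioo (0:ℝ) 1)] 0)
  fatou : ∀ f : ℕ → ℝ → ℝ≥0∞, (∀ k, Measurable (f k)) → Monotone f →
    N (fun t => ⨆ k, f k t) = ⨆ k, N (f k)
  indicator_lt_top : N ((Set.Ioo (0:ℝ) 1).indicator fun _ => 1) < ⊤
  le_L1 : ∃ C : ℝ≥0∞, C ≠ ⊤ ∧ ∀ f : ℝ → ℝ≥0∞, Measurable f →
    (∫⁻ t in Set.Ioo (0:ℝ) 1, f t) ≤ C * N f

/-- The norm in `X` of an `ℝ≥0∞`-valued function on `Q₀`, computed through the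
representation space: `‖g‖_X = ‖g*‖_{X̄}`. -/
def RISpace.normE (X : RISpace) (Q₀ : Cube n) (g : (Fin n → ℝ) → ℝ≥0∞) : ℝ≥0∞ :=
  X.N (rearr Q₀ g)

/-- The norm `‖f‖_X = ‖f*‖_{X̄}` of a real function on `Q₀`. -/
def RISpace.normF (X : RISpace) (Q₀ : Cube n) (f : (Fin n → ℝ) → ℝ) : ℝ≥0∞ :=
  X.N (rearrF Q₀ f)

/-- The Garsia–Rodemich functional `‖f‖_{GaRo_X} = inf {‖γ‖_X : γ ∈ Γ_f}`. -/
def GaRoNorm (X : RISpace) (Q₀ : Cube n) (f : (Fin n → ℝ) → ℝ) : ℝ≥0∞ :=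
  ⨅ γ ∈ {γ | MemGamma Q₀ f γ}, X.normF Q₀ γ

/-- `f ∈ GaRo_X`: `f ∈ L¹(Q₀)` and `Γ_f ∩ X ≠ ∅`. -/
def MemGaRo (X : RISpace) (Q₀ : Cube n) (f : (Fin n → ℝ) → ℝ) : Prop :=
  IntegrableOn f Q₀.set volume ∧ ∃ γ, MemGamma Q₀ f γ ∧ X.normF Q₀ γ < ⊤

/-- `f ∈ X`. -/
def MemX (X : RISpace) (Q₀ : Cube n) (f : (Fin n → ℝ) → ℝ) : Prop :=
  IntegrableOn f Q₀.set volume ∧ X.normF Q₀ f < ⊤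

/-- Decreasing rearrangement on `(0,1)` of an `ℝ≥0∞`-valued function on `(0,1)`. -/
def rearrI (g : ℝ → ℝ≥0∞) (t : ℝ) : ℝ≥0∞ :=
  sInf {a : ℝ≥0∞ | volume {u ∈ Set.Ioo (0:ℝ) 1 | a < g u} ≤ ENNReal.ofReal t}

/-- The dilation operator `σ_s g (t) = g*(t/s)` for `0 < t < min s 1`, `0` otherwise. -/
def dil (s : ℝ) (g : ℝ → ℝ≥0∞) (t : ℝ) : ℝ≥0∞ :=
  if 0 < t ∧ t < min s 1 then rearrI g (t / s) else 0

/-- The operator norm `‖σ_s‖_{X̄ → X̄}`. -/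
def RISpace.dilNorm (X : RISpace) (s : ℝ) : ℝ≥0∞ :=
  ⨆ g ∈ {g : ℝ → ℝ≥0∞ | Measurable g ∧ X.N g ≤ 1}, X.N (dil s g)

/-- The lower Boyd index `α_X = lim_{s → 0+} log ‖σ_s‖ / log s`. -/
def RISpace.boydLower (X : RISpace) : ℝ :=
  limUnder (nhdsWithin (0:ℝ) (Set.Ioi 0)) fun s : ℝ =>
    Real.log (X.dilNorm s).toReal / Real.log s

/-- The upper Boyd index `β_X = lim_{s → ∞} log ‖σ_s‖ / log s`. -/
def RISpace.boydUpper (X : RISpace) : ℝ :=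
  limUnder atTop fun s : ℝ => Real.log (X.dilNorm s).toReal / Real.log s

/-- The fundamental function `φ_X(s) = ‖χ_{(0,s)}‖_{X̄}`. -/
def RISpace.fund (X : RISpace) (s : ℝ) : ℝ≥0∞ :=
  X.N ((Set.Ioo (0:ℝ) s).indicator fun _ => 1)

/-- `X` is of fundamental type: `‖σ_t‖ ≤ C sup_{s > 0, st ≤ 1} φ_X(st)/φ_X(s)`. -/
def RISpace.FundamentalType (X : RISpace) : Prop :=
  ∃ C : ℝ≥0∞, C ≠ ⊤ ∧ ∀ t : ℝ, 0 < t →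
    X.dilNorm t ≤ C * ⨆ s ∈ {s : ℝ | 0 < s ∧ s * t ≤ 1}, X.fund (s * t) / X.fund s

/-- The `BMO(Q₀)` seminorm `sup_{Q ⊆ Q₀} (1/|Q|) ∫_Q |f - f_Q|`. -/
def bmoNormE (Q₀ : Cube n) (f : (Fin n → ℝ) → ℝ) : ℝ≥0∞ :=
  ⨆ Q ∈ {Q : Cube n | Q.set ⊆ Q₀.set}, oscAvg f Q

/-- The `L¹(Q₀)` norm, extended-real-valued. -/
def L1normE (Q₀ : Cube n) (f : (Fin n → ℝ) → ℝ) : ℝ≥0∞ :=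
  ∫⁻ x in Q₀.set, ENNReal.ofReal |f x|

/-- The Peetre K-functional for the couple `(L¹(Q₀), BMO(Q₀))` (modulo constants). -/
def KL1BMO (Q₀ : Cube n) (t : ℝ) (f : (Fin n → ℝ) → ℝ) : ℝ≥0∞ :=
  ⨅ g : (Fin n → ℝ) → ℝ,
    (L1normE Q₀ fun x => f x - g x) + ENNReal.ofReal t * bmoNormE Q₀ g

/-- The unit cube `[0,1] ⊆ ℝ¹`, used to model the interval `(0,1)`. -/
def unitCube : Cube 1 := ⟨fun _ => 0, 1, one_pos⟩

/-- The John–Nirenberg functional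
`‖f‖_{JN_p} = sup_π (Σᵢ |Qᵢ| ((1/|Qᵢ|) ∫_{Qᵢ} |f - f_{Qᵢ}|)^p)^{1/p}`. -/
def JNnorm (Q₀ : Cube n) (p : ℝ) (f : (Fin n → ℝ) → ℝ) : ℝ≥0∞ :=
  ⨆ π ∈ {π : Set (Cube n) | IsPacking Q₀ π},
    (∑' Q : π, (Q : Cube n).vol * oscAvg f (Q : Cube n) ^ p) ^ (1 / p)

/-- `γ ∈ Γ'_f`: `γ ∈ L¹(Q₀)` and `f^#_{Q₀} ≤ M_{Q₀} γ` on `Q₀`. -/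
def MemGammaP (Q₀ : Cube n) (f γ : (Fin n → ℝ) → ℝ) : Prop :=
  IntegrableOn γ Q₀.set volume ∧ ∀ x ∈ Q₀.set, sharpMax Q₀ f x ≤ hlMax Q₀ γ x

/-- `S_{π,#}(f) = Σ_{Q ∈ π} ((1/|Q|) ∫_Q |f - f_Q|) χ_Q`. -/
def packFn (π : Set (Cube n)) (f : (Fin n → ℝ) → ℝ) (x : Fin n → ℝ) : ℝ≥0∞ :=
  ∑' Q : π, (Q : Cube n).set.indicator (fun _ => oscAvg f (Q : Cube n)) x

/-- `F_{f,#}(t) = sup_{π packing} (S_{π,#}(f))*(t)`. -/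
def Fsharp (Q₀ : Cube n) (f : (Fin n → ℝ) → ℝ) (t : ℝ) : ℝ≥0∞ :=
  ⨆ π ∈ {π : Set (Cube n) | IsPacking Q₀ π}, rearr Q₀ (packFn π f) t

/-- The `GaRo_{∞,λ}` functional: the least constant `C` such that, for every packing,
`Σᵢ (1/|Qᵢ|) ∫∫ |f x - f y| ≤ C Σᵢ |Qᵢ|^{1+λ/n}`. -/
def GaRoLamNorm (Q₀ : Cube n) (lam : ℝ) (f : (Fin n → ℝ) → ℝ) : ℝ≥0∞ :=
  sInf {C : ℝ≥0∞ | ∀ π : Set (Cube n), IsPacking Q₀ π →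
    ∑' Q : π, dblOsc f (Q : Cube n) ≤ C * ∑' Q : π, (Q : Cube n).vol ^ (1 + lam / (n : ℝ))}

/-- The homogeneous Campanato seminorm
`‖f‖_{𝓛̇^{1,λ}} = sup_{Q ⊆ Q₀} |Q|^{-λ/n} (1/|Q|) ∫_Q |f - f_Q|`. -/
def campNorm (Q₀ : Cube n) (lam : ℝ) (f : (Fin n → ℝ) → ℝ) : ℝ≥0∞ :=
  ⨆ Q ∈ {Q : Cube n | Q.set ⊆ Q₀.set}, Q.vol ^ (-(lam / (n : ℝ))) * oscAvg f Q

/-- The Gagliardo (fractional Sobolev) seminorm `‖f‖_{W^{α,p}}` on `Q₀`. -/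
def sobNorm (Q₀ : Cube n) (a p : ℝ) (f : (Fin n → ℝ) → ℝ) : ℝ≥0∞ :=
  (∫⁻ x in Q₀.set, ∫⁻ y in Q₀.set,
      ENNReal.ofReal
        (|f x - f y| ^ p / Real.sqrt (∑ i, (x i - y i) ^ 2) ^ ((n : ℝ) + a * p))) ^ (1 / p)



section AuxGaRo2

lemma cube_corner_mem {n : ℕ} (P : Cube n) : P.corner ∈ P.set :=
  Set.mem_Icc.mpr ⟨le_refl _, fun i => by
    show P.corner i ≤ P.corner i + P.side; linarith [P.side_pos]⟩

lemma cube_top_mem {n : ℕ} (P : Cube n) : (fun i => P.corner i + P.side) ∈ P.set :=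
  Set.mem_Icc.mpr ⟨fun i => by
    show P.corner i ≤ P.corner i + P.side; linarith [P.side_pos], le_refl _⟩

lemma cube_side_le {n : ℕ} (hn : 0 < n) {P Q : Cube n} (h : P.set ⊆ Q.set) :
    P.side ≤ Q.side := by
  have h1 := Set.mem_Icc.mp (h (cube_corner_mem P))
  have h2 := Set.mem_Icc.mp (h (cube_top_mem P))
  have a := h1.1 ⟨0, hn⟩
  have b := h2.2 ⟨0, hn⟩
  dsimp at a b
  linarith

lemma cube_set_eq_closedBall {n : ℕ} (P : Cube n) :
    P.set = Metric.closedBall (fun i => P.corner i + P.side / 2) (P.side / 2) := by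
  have hr : (0:ℝ) ≤ P.side / 2 := by linarith [P.side_pos]
  rw [closedBall_pi _ hr]
  ext z
  simp only [Cube.set, Set.mem_Icc, Set.mem_pi, Set.mem_univ, forall_true_left,
    Real.closedBall_eq_Icc, Pi.le_def]
  constructor
  · rintro ⟨h1, h2⟩ i
    exact ⟨by linarith [h1 i], by linarith [h2 i]⟩
  · intro h
    exact ⟨fun i => by linarith [(h i).1], fun i => by linarith [(h i).2]⟩

end AuxGaRo2

/-- Lemma: weak type bound for the local maximal function.
For every cube `Q ⊆ Q₀`, `s ∈ (0,1)`, `c ∈ ℝ`, `f ∈ L¹(Q₀)` and `λ > 0`: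
`|{y ∈ Q : M^#_{s,Q} f y > λ}| ≤ (4ⁿ/s) |{y ∈ Q : |f y - c| > λ}|`. -/
theorem garsia_rodemich_stmt2 {n : ℕ} (Q₀ : Cube n) (hQ₀ : volume Q₀.set = 1)
    (Q : Cube n) (hQ : Q.set ⊆ Q₀.set) (s : ℝ) (hs : s ∈ Set.Ioo (0:ℝ) 1) (c : ℝ)
    (f : (Fin n → ℝ) → ℝ) (hf : IntegrableOn f Q₀.set volume)
    (lam : ℝ) (hlam : 0 < lam) :
    volume {y ∈ Q.set | ENNReal.ofReal lam < locSharpMax s Q f y} ≤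
      (4 ^ n / ENNReal.ofReal s) * volume {y ∈ Q.set | lam < |f y - c|} := by
  classical
  obtain ⟨hs0, hs1⟩ := hs
  have hsne : ENNReal.ofReal s ≠ 0 := (ENNReal.ofReal_pos.mpr hs0).ne'
  have hstop : ENNReal.ofReal s ≠ ⊤ := ENNReal.ofReal_ne_top
  set E : Set (Fin n → ℝ) := {y ∈ Q.set | lam < |f y - c|} with hE
  set U : Set (Fin n → ℝ) := {y ∈ Q.set | ENNReal.ofReal lam < locSharpMax s Q f y} with hUdef
  have key : ∀ y ∈ U, ∃ P : Cube n, P.set ⊆ Q.set ∧ y ∈ P.set ∧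
      ENNReal.ofReal s * P.vol ≤ volume (P.set ∩ E) := by
    rintro y ⟨hyQ, hy⟩
    rw [locSharpMax] at hy
    simp only [lt_iSup_iff] at hy
    obtain ⟨P, hPmem, hP⟩ := hy
    obtain ⟨hPsub, hyP⟩ := hPmem
    refine ⟨P, hPsub, hyP, ?_⟩
    have h2 : oscS s f P ≤ sInf {a : ℝ≥0∞ |
        volume {z ∈ P.set | a < ENNReal.ofReal |f z - c|} < ENNReal.ofReal s * P.vol} :=
      iInf_le _ c
    have h3 := lt_of_lt_of_le hP h2
    have h4 : ¬ (volume {z ∈ P.set | ENNReal.ofReal lam < ENNReal.ofReal |f z - c|}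
        < ENNReal.ofReal s * P.vol) := by
      intro hmem
      have hmem' : ENNReal.ofReal lam ∈ {a : ℝ≥0∞ |
          volume {z ∈ P.set | a < ENNReal.ofReal |f z - c|} < ENNReal.ofReal s * P.vol} := hmem
      exact absurd (sInf_le hmem') (not_le.mpr h3)
    refine le_trans (not_lt.mp h4) (measure_mono ?_)
    rintro z ⟨hz1, hz2⟩
    refine ⟨hz1, hPsub hz1, ?_⟩
    by_contra hcon
    exact absurd hz2 (not_lt.mpr (ENNReal.ofReal_le_ofReal (not_lt.mp hcon)))
  haveI : Inhabited (Cube n) := ⟨Q⟩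
  choose! Qc hQc1 hQc2 hQc3 using key
  set QT : (Fin n → ℝ) → Cube n := fun y =>
    ⟨(Qc y).corner, min (Qc y).side Q.side, lt_min (Qc y).side_pos Q.side_pos⟩ with hQT
  have hQTset : ∀ y ∈ U, (QT y).set = (Qc y).set := by
    intro y hy
    rcases Nat.eq_zero_or_pos n with hn | hn
    · subst hn
      haveI : Subsingleton (Fin 0 → ℝ) := ⟨fun a b => funext fun i => i.elim0⟩
      have huniv : ∀ P : Cube 0, P.set = Set.univ := fun P =>
        Set.eq_univ_of_forall (fun z => (Subsingleton.elim z P.corner) ▸ cube_corner_mem P)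
      rw [huniv, huniv]
    · have hmin : min (Qc y).side Q.side = (Qc y).side :=
        min_eq_left (cube_side_le hn (hQc1 y hy))
      simp only [hQT, Cube.set, hmin]
  set ctr : (Fin n → ℝ) → (Fin n → ℝ) := fun y i => (QT y).corner i + (QT y).side / 2 with hctr
  set rad : (Fin n → ℝ) → ℝ := fun y => (QT y).side / 2 with hrad
  have hball : ∀ y, (QT y).set = Metric.closedBall (ctr y) (rad y) := fun y =>
    cube_set_eq_closedBall (QT y)
  have hrpos : ∀ y, 0 < rad y := fun y => by
    have := (QT y).side_pos
    simp only [hrad]; linarith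
  have hrle : ∀ y ∈ U, rad y ≤ Q.side := fun y _ => by
    have h1 : (QT y).side ≤ Q.side := min_le_right _ _
    have h2 := Q.side_pos
    simp only [hrad]; linarith
  obtain ⟨u, huU, hdisj, hcov⟩ :=
    Vitali.exists_disjoint_subfamily_covering_enlargement
      (fun y => Metric.closedBall (ctr y) (rad y)) U rad (3/2) (by norm_num)
      (fun y _ => (hrpos y).le) Q.side hrle
      (fun y _ => (Metric.nonempty_closedBall.mpr (hrpos y).le))
  have hucnt : u.Countable := by
    have hcnt := MeasureTheory.Measure.countable_meas_pos_of_disjoint_iUnion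
      (μ := volume) (As := fun b : u => Metric.closedBall (ctr b) (rad b))
      (fun b => measurableSet_closedBall)
      (fun b b' hne => hdisj b.2 b'.2 (fun h => hne (Subtype.ext h)))
    have huniv : {i : u | 0 < volume (Metric.closedBall (ctr i) (rad i))} = Set.univ := by
      refine Set.eq_univ_of_forall (fun b => ?_)
      have hb := hrpos b
      simp only [Set.mem_setOf_eq, Real.volume_pi_closedBall _ (hrpos (b : Fin n → ℝ)).le]
      exact ENNReal.ofReal_pos.mpr (by positivity)
    rw [huniv] at hcnt
    exact Set.countable_coe_iff.mp (Set.countable_univ_iff.mp hcnt)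
  have hUsub : U ⊆ ⋃ b ∈ u, Metric.closedBall (ctr b) (4 * rad b) := by
    intro y hy
    obtain ⟨b, hbu, ⟨p, hp1, hp2⟩, hrle'⟩ := hcov y hy
    have hyball : y ∈ Metric.closedBall (ctr y) (rad y) := by
      rw [← hball y, hQTset y hy]; exact hQc2 y hy
    have d1 : dist y (ctr y) ≤ rad y := Metric.mem_closedBall.mp hyball
    have d2 : dist p (ctr y) ≤ rad y := Metric.mem_closedBall.mp hp1
    have d3 : dist p (ctr b) ≤ rad b := Metric.mem_closedBall.mp hp2
    have hdy : dist y (ctr b) ≤ 4 * rad b := by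
      calc dist y (ctr b) ≤ dist y (ctr y) + dist (ctr y) p + dist p (ctr b) :=
            dist_triangle4 _ _ _ _
        _ ≤ rad y + rad y + rad b := by rw [dist_comm (ctr y) p]; gcongr
        _ ≤ 4 * rad b := by linarith
    exact Set.mem_biUnion hbu (Metric.mem_closedBall.mpr hdy)
  have hvol4 : ∀ b, volume (Metric.closedBall (ctr b) (4 * rad b)) =
      4 ^ n * volume (Metric.closedBall (ctr b) (rad b)) := by
    intro b
    have hb := hrpos b
    rw [Real.volume_pi_closedBall _ (by linarith : (0:ℝ) ≤ 4 * rad b),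
      Real.volume_pi_closedBall _ (hrpos b).le, Fintype.card_fin,
      show (2 * (4 * rad b)) ^ n = 4 ^ n * (2 * rad b) ^ n from by ring,
      ENNReal.ofReal_mul (by positivity), ENNReal.ofReal_pow (by norm_num)]
    norm_num
  have hkey : ∀ b ∈ u, volume (Metric.closedBall (ctr b) (rad b)) ≤
      volume (Metric.closedBall (ctr b) (rad b) ∩ E) / ENNReal.ofReal s := by
    intro b hb
    have hbU := huU hb
    have h1 := hQc3 b hbU
    simp only [Cube.vol] at h1
    rw [← hQTset b hbU, hball b] at h1
    rw [ENNReal.le_div_iff_mul_le (Or.inl hsne) (Or.inl hstop), mul_comm]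
    exact h1
  have hsum : ∑' b : u, volume (Metric.closedBall (ctr b) (rad b) ∩ E) ≤ volume E := by
    calc ∑' b : u, volume (Metric.closedBall (ctr b) (rad b) ∩ E)
        = ∑' b : u, volume.restrict E (Metric.closedBall (ctr b) (rad b)) :=
          tsum_congr fun b => (Measure.restrict_apply measurableSet_closedBall).symm
      _ = volume.restrict E (⋃ b ∈ u, Metric.closedBall (ctr b) (rad b)) :=
          (measure_biUnion hucnt hdisj (fun b _ => measurableSet_closedBall)).symm
      _ ≤ volume.restrict E Set.univ := measure_mono (Set.subset_univ _)
      _ = volume E := by rw [Measure.restrict_apply_univ]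
  calc volume U ≤ volume (⋃ b ∈ u, Metric.closedBall (ctr b) (4 * rad b)) :=
        measure_mono hUsub
    _ ≤ ∑' b : u, volume (Metric.closedBall (ctr b) (4 * rad b)) :=
        measure_biUnion_le _ hucnt _
    _ = ∑' b : u, 4 ^ n * volume (Metric.closedBall (ctr b) (rad b)) :=
        tsum_congr fun b => hvol4 b
    _ ≤ ∑' b : u, 4 ^ n * (volume (Metric.closedBall (ctr b) (rad b) ∩ E) / ENNReal.ofReal s) :=
        ENNReal.tsum_le_tsum fun b => mul_le_mul_right (hkey b b.2) _
    _ = ∑' b : u, (4 ^ n / ENNReal.ofReal s) *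
          volume (Metric.closedBall (ctr b) (rad b) ∩ E) :=
        tsum_congr fun b => by rw [div_eq_mul_inv, div_eq_mul_inv]; ring
    _ = (4 ^ n / ENNReal.ofReal s) *
          ∑' b : u, volume (Metric.closedBall (ctr b) (rad b) ∩ E) :=
        ENNReal.tsum_mul_left
    _ ≤ (4 ^ n / ENNReal.ofReal s) * volume E := mul_le_mul_right hsum _


end
end

section
/- Let f ∈ L¹(Q₀) and let γ ∈ Γ_f. Then f^#_{Q₀}(x) ≤ M_{Q₀}γ(x) for every x ∈ Q₀. -/
open MeasureTheory ENNReal NNReal Set Filter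

noncomputable section

variable {n : ℕ}

lemma cube_vol_eq {n : ℕ} (Q : Cube n) :
    volume Q.set = ENNReal.ofReal Q.side ^ n := by
  rw [Cube.set, Real.volume_Icc_pi]
  simp [add_sub_cancel_left]

lemma cube_vol_pos {n : ℕ} (Q : Cube n) : 0 < volume Q.set := by
  rw [cube_vol_eq]
  exact ENNReal.pow_pos (ENNReal.ofReal_pos.2 Q.side_pos) n

lemma cube_vol_lt_top {n : ℕ} (Q : Cube n) : volume Q.set < ⊤ := by
  rw [cube_vol_eq]
  exact ENNReal.pow_lt_top ENNReal.ofReal_lt_top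

lemma cube_measurableSet {n : ℕ} (Q : Cube n) : MeasurableSet Q.set :=
  measurableSet_Icc

/-- Key pointwise bound: `oscAvg f Q ≤ dblOsc f Q / Q.vol`. -/
lemma oscAvg_le_dblOsc_div {n : ℕ} (Q : Cube n) (f : (Fin n → ℝ) → ℝ)
    (hf : IntegrableOn f Q.set volume) :
    oscAvg f Q ≤ dblOsc f Q / Q.vol := by
  have hvol0 : volume Q.set ≠ 0 := (cube_vol_pos Q).ne'
  have hvolT : volume Q.set ≠ ⊤ := (cube_vol_lt_top Q).ne
  set V : ℝ := (volume Q.set).toReal with hV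
  have hVpos : 0 < V := ENNReal.toReal_pos hvol0 hvolT
  have hVvol : ENNReal.ofReal V = volume Q.set := ENNReal.ofReal_toReal hvolT
  -- pointwise bound
  have key : ∀ x, ENNReal.ofReal |f x - cubeAvg f Q| ≤
      (∫⁻ y in Q.set, ENNReal.ofReal |f x - f y|) / Q.vol := by
    intro x
    have hconst : IntegrableOn (fun _ : Fin n → ℝ => f x) Q.set volume := by
      refine integrableOn_const ?_ enorm_ne_top
      exact (cube_vol_lt_top Q).ne
    have hsub : IntegrableOn (fun y => f x - f y) Q.set volume := hconst.sub hf
    have h1 : ∫ y in Q.set, (f x - f y) = V * f x - ∫ y in Q.set, f y := by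
      rw [integral_sub hconst hf, setIntegral_const, smul_eq_mul, measureReal_def, ← hV]
    have h2 : f x - cubeAvg f Q = (∫ y in Q.set, (f x - f y)) / V := by
      rw [h1, cubeAvg, ← hV]
      field_simp
    have h3 : |f x - cubeAvg f Q| ≤ (∫ y in Q.set, |f x - f y|) / V := by
      rw [h2, abs_div, abs_of_pos hVpos]
      gcongr
      simpa using norm_integral_le_integral_norm (μ := volume.restrict Q.set)
        (fun y => f x - f y)
    calc ENNReal.ofReal |f x - cubeAvg f Q|
        ≤ ENNReal.ofReal ((∫ y in Q.set, |f x - f y|) / V) := ENNReal.ofReal_le_ofReal h3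
      _ = ENNReal.ofReal (∫ y in Q.set, |f x - f y|) / ENNReal.ofReal V :=
          ENNReal.ofReal_div_of_pos hVpos
      _ ≤ (∫⁻ y in Q.set, ENNReal.ofReal |f x - f y|) / Q.vol := by
          rw [hVvol]
          apply ENNReal.div_le_div_right
          rw [ofReal_integral_eq_lintegral_ofReal hsub.abs
            (Filter.Eventually.of_forall fun y => abs_nonneg _)]
  have hstep : (∫⁻ x in Q.set, ENNReal.ofReal |f x - cubeAvg f Q|) ≤
      (∫⁻ x in Q.set, ∫⁻ y in Q.set, ENNReal.ofReal |f x - f y|) / Q.vol := by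
    calc (∫⁻ x in Q.set, ENNReal.ofReal |f x - cubeAvg f Q|)
        ≤ ∫⁻ x in Q.set, (∫⁻ y in Q.set, ENNReal.ofReal |f x - f y|) / Q.vol :=
          lintegral_mono fun x => key x
      _ = (∫⁻ x in Q.set, ∫⁻ y in Q.set, ENNReal.ofReal |f x - f y|) / Q.vol := by
          simp only [div_eq_mul_inv]
          exact lintegral_mul_const' _ _ (by
            simp [ENNReal.inv_ne_top, Cube.vol, hvol0])
  calc oscAvg f Q ≤
      ((∫⁻ x in Q.set, ∫⁻ y in Q.set, ENNReal.ofReal |f x - f y|) / Q.vol) / Q.vol :=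
        ENNReal.div_le_div_right hstep _
    _ = dblOsc f Q / Q.vol := rfl

set_option maxHeartbeats 1000000 in
/-- If `f ∈ L¹(Q₀)` and `γ ∈ Γ_f`, then
`f^#_{Q₀}(x) ≤ M_{Q₀} γ (x)` for all `x ∈ Q₀`. -/
theorem garsia_rodemich_stmt7 {n : ℕ} (Q₀ : Cube n) (hQ₀ : volume Q₀.set = 1)
    (f γ : (Fin n → ℝ) → ℝ) (hf : IntegrableOn f Q₀.set volume)
    (hγ : MemGamma Q₀ f γ) :
    ∀ x ∈ Q₀.set, sharpMax Q₀ f x ≤ hlMax Q₀ γ x := by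
  intro x _
  rw [sharpMax, hlMax, hlMaxE]
  refine iSup₂_le fun Q hQ => ?_
  obtain ⟨hQsub, hxQ⟩ := hQ
  -- singleton packing
  have hpack : IsPacking Q₀ {Q} := by
    refine ⟨Set.countable_singleton Q, ?_, ?_⟩
    · rintro Q' rfl; exact hQsub
    · exact Set.pairwise_singleton _ _
  have hsum := hγ.2 {Q} hpack
  have e1 : ∑' Q' : ({Q} : Set (Cube n)), dblOsc f (Q' : Cube n) = dblOsc f Q :=
    tsum_singleton Q fun q => dblOsc f q
  have e2 : ∑' Q' : ({Q} : Set (Cube n)),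
      ENNReal.ofReal (∫ y in (Q' : Cube n).set, γ y) =
      ENNReal.ofReal (∫ y in Q.set, γ y) :=
    tsum_singleton Q fun q => ENNReal.ofReal (∫ y in q.set, γ y)
  rw [e1, e2] at hsum
  -- dblOsc f Q ≤ ofReal (∫ γ) ≤ ∫⁻ ofReal |γ|
  have hγQ : IntegrableOn γ Q.set volume := hγ.1.mono_set hQsub
  have hγ2 : ENNReal.ofReal (∫ y in Q.set, γ y) ≤
      ∫⁻ y in Q.set, ENNReal.ofReal |γ y| := by
    calc ENNReal.ofReal (∫ y in Q.set, γ y)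
        ≤ ENNReal.ofReal (∫ y in Q.set, |γ y|) := by
          apply ENNReal.ofReal_le_ofReal
          exact integral_mono hγQ hγQ.abs fun y => le_abs_self _
      _ = ∫⁻ y in Q.set, ENNReal.ofReal |γ y| :=
          ofReal_integral_eq_lintegral_ofReal hγQ.abs
            (Filter.Eventually.of_forall fun y => abs_nonneg _)
  calc oscAvg f Q ≤ dblOsc f Q / Q.vol :=
        oscAvg_le_dblOsc_div Q f (hf.mono_set hQsub)
    _ ≤ (∫⁻ y in Q.set, ENNReal.ofReal |γ y|) / Q.vol :=
        ENNReal.div_le_div_right (hsum.trans hγ2) _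
    _ ≤ ⨆ Q' ∈ subcubesAt Q₀ x, (∫⁻ y in Q'.set, ENNReal.ofReal |γ y|) / Q'.vol :=
        le_biSup (fun Q' : Cube n => (∫⁻ y in Q'.set, ENNReal.ofReal |γ y|) / Q'.vol)
          (show Q ∈ subcubesAt Q₀ x from ⟨hQsub, hxQ⟩)

end
end

section
/- There exists a constant c > 0, depending only on the dimension n, such that for all f ∈ L¹(Q₀) one has f**(t) − f*(t) ≤ c (f^#_{Q₀})*(t) for all 0 < t < 1/6. -/
open MeasureTheory ENNReal NNReal Set Filter

noncomputable section

variable {n : ℕ}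

namespace GR11

variable {n : ℕ}

/-- A dyadic subcube of the cube with corner `c` and side `s`. -/
def dyC (c : Fin n → ℝ) (s : ℝ) (hs : 0 < s) (k : ℕ) (j : Fin n → ℕ) : Cube n :=
  ⟨fun i => c i + j i * (s / 2 ^ k), s / 2 ^ k, by positivity⟩

variable (c : Fin n → ℝ) {s : ℝ} (hs : 0 < s)

lemma dyC_set (k : ℕ) (j : Fin n → ℕ) : (dyC c s hs k j).set =
    Icc (fun i => c i + j i * (s / 2 ^ k)) (fun i => c i + j i * (s / 2 ^ k) + s / 2 ^ k) := rfl

lemma dyC_vol (k : ℕ) (j : Fin n → ℕ) :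
    volume (dyC c s hs k j).set = (ENNReal.ofReal (s / 2 ^ k)) ^ n := by
  rw [dyC_set, Real.volume_Icc_pi]
  simp [Finset.prod_const]

lemma dyC_zero_set : (dyC c s hs 0 (fun _ => 0)).set = Icc c (fun i => c i + s) := by
  rw [dyC_set]
  congr 1 <;> funext i <;> simp

lemma dyC_subset (k : ℕ) {j : Fin n → ℕ} (hj : ∀ i, j i < 2 ^ k) :
    (dyC c s hs k j).set ⊆ Icc c (fun i => c i + s) := by
  rw [dyC_set]
  apply Icc_subset_Icc <;> intro i <;> simp only
  · have : (0:ℝ) ≤ j i * (s / 2 ^ k) := by positivity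
    linarith
  · have h1 : ((j i : ℝ) + 1) ≤ 2 ^ k := by
      exact_mod_cast Nat.succ_le_of_lt (hj i)
    have h2 : ((j i : ℝ) + 1) * (s / 2 ^ k) ≤ (2:ℝ) ^ k * (s / 2 ^ k) := by
      apply mul_le_mul_of_nonneg_right h1; positivity
    have h3 : (2:ℝ) ^ k * (s / 2 ^ k) = s := by field_simp
    nlinarith

lemma dyC_parent (k : ℕ) (j : Fin n → ℕ) :
    (dyC c s hs (k+1) j).set ⊆ (dyC c s hs k (fun i => j i / 2)).set := by
  rw [dyC_set, dyC_set]
  have h2 : s / 2 ^ k = 2 * (s / 2 ^ (k+1)) := by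
    rw [pow_succ]; field_simp
  have hp : (0:ℝ) < s / 2 ^ (k+1) := by positivity
  apply Icc_subset_Icc <;> intro i <;> simp only <;> rw [h2]
  · have h1 : ((j i / 2 : ℕ) : ℝ) * 2 ≤ (j i : ℝ) := by
      exact_mod_cast Nat.div_mul_le_self (j i) 2
    nlinarith
  · have h1 : (j i : ℝ) + 1 ≤ ((j i / 2 : ℕ) : ℝ) * 2 + 2 := by
      exact_mod_cast (by omega : j i + 1 ≤ (j i / 2) * 2 + 2)
    nlinarith

lemma dyC_anc {m k : ℕ} (hmk : m ≤ k) (j : Fin n → ℕ) :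
    (dyC c s hs k j).set ⊆ (dyC c s hs m (fun i => j i / 2 ^ (k - m))).set := by
  obtain ⟨d, rfl⟩ : ∃ d, k = m + d := ⟨k - m, by omega⟩
  have hd : m + d - m = d := by omega
  rw [hd]
  clear hmk hd
  induction d generalizing j with
  | zero => simp
  | succ d ih =>
    refine (dyC_parent c hs (m + d) j).trans ?_
    have h2 := ih (fun i => j i / 2)
    have e : (fun i => j i / 2 / 2 ^ d) = (fun i => j i / 2 ^ (d + 1)) := by
      funext i; rw [Nat.div_div_eq_div_mul, pow_succ, mul_comm]
    rw [e] at h2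
    exact h2

lemma anc_lt {m k : ℕ} (hmk : m ≤ k) {j : Fin n → ℕ} (hj : ∀ i, j i < 2 ^ k) (i : Fin n) :
    j i / 2 ^ (k - m) < 2 ^ m := by
  rw [Nat.div_lt_iff_lt_mul (Nat.pow_pos (by norm_num))]
  calc j i < 2 ^ k := hj i
  _ = 2 ^ m * 2 ^ (k - m) := by rw [← pow_add]; congr 1; omega

/-- Index of the dyadic cube of generation `k` containing `x`. -/
def dyJ (c : Fin n → ℝ) (s : ℝ) (k : ℕ) (x : Fin n → ℝ) : Fin n → ℕ :=
  fun i => ⌊(x i - c i) / (s / 2 ^ k)⌋₊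

variable {c} {x : Fin n → ℝ}

include hs in
lemma dyJ_lt (hlo : ∀ i, c i ≤ x i) (hhi : ∀ i, x i < c i + s) (k : ℕ) (i : Fin n) :
    dyJ c s k x i < 2 ^ k := by
  have hp : (0:ℝ) < s / 2 ^ k := by positivity
  rw [dyJ, Nat.floor_lt (div_nonneg (sub_nonneg.2 (hlo i)) hp.le)]
  rw [div_lt_iff₀ hp]
  have h3 : (2:ℝ) ^ k * (s / 2 ^ k) = s := by field_simp
  have := hhi i
  push_cast
  linarith

lemma mem_dyC (hlo : ∀ i, c i ≤ x i) (hhi : ∀ i, x i < c i + s) (k : ℕ) :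
    x ∈ (dyC c s hs k (dyJ c s k x)).set := by
  have hp : (0:ℝ) < s / 2 ^ k := by positivity
  rw [dyC_set]
  refine Set.mem_Icc.2 ⟨fun i => ?_, fun i => ?_⟩
  · have h1 : (⌊(x i - c i) / (s / 2 ^ k)⌋₊ : ℝ) ≤ (x i - c i) / (s / 2 ^ k) :=
      Nat.floor_le (div_nonneg (sub_nonneg.2 (hlo i)) hp.le)
    have h2 := (le_div_iff₀ hp).1 h1
    simpa [dyJ] using by linarith [h2]
  · have h1 : (x i - c i) / (s / 2 ^ k) < ⌊(x i - c i) / (s / 2 ^ k)⌋₊ + 1 :=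
      Nat.lt_floor_add_one _
    have h2 := (div_lt_iff₀ hp).1 h1
    simp only [dyJ]
    nlinarith [h2]

include hs in
lemma dyJ_anc (hlo : ∀ i, c i ≤ x i) {m k : ℕ} (hmk : m ≤ k) (i : Fin n) :
    dyJ c s m x i = dyJ c s k x i / 2 ^ (k - m) := by
  have hs2 : (0:ℝ) < s / 2 ^ k := by positivity
  simp only [dyJ]
  rw [← Nat.floor_div_natCast]
  congr 1
  push_cast
  rw [div_div]
  congr 1
  have h2 : (2:ℝ) ^ k = 2 ^ m * 2 ^ (k - m) := by rw [← pow_add]; congr 1; omega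
  rw [h2]
  field_simp

variable (c)

lemma dyC_inter_null {k k' : ℕ} (hkk : k ≤ k') {j j' : Fin n → ℕ}
    (hne : (fun i => j' i / 2 ^ (k' - k)) ≠ j) :
    volume ((dyC c s hs k j).set ∩ (dyC c s hs k' j').set) = 0 := by
  obtain ⟨i, hi⟩ : ∃ i, j' i / 2 ^ (k' - k) ≠ j i := by
    by_contra hc
    push_neg at hc
    exact hne (funext hc)
  rw [dyC_set, dyC_set, Set.Icc_inter_Icc, Real.volume_Icc_pi]
  apply Finset.prod_eq_zero (Finset.mem_univ i)
  rw [ENNReal.ofReal_eq_zero]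
  set d : ℕ := 2 ^ (k' - k) with hd
  have hdpos : 0 < d := Nat.pow_pos (by norm_num)
  have h' : (0:ℝ) < s / 2 ^ k' := by positivity
  have hk2 : s / 2 ^ k = d * (s / 2 ^ k') := by
    have h2 : (2:ℝ) ^ k' = 2 ^ k * 2 ^ (k' - k) := by rw [← pow_add]; congr 1; omega
    rw [hd]
    push_cast
    rw [h2]
    field_simp
  simp only [Pi.sup_apply, Pi.inf_apply, sub_nonpos]
  rcases Nat.lt_or_ge (j' i / d) (j i) with hq | hq
  · -- j' i + 1 ≤ j i * d : upper of I' is below lower of I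
    have h1 : j' i + 1 ≤ j i * d := Nat.succ_le_of_lt ((Nat.div_lt_iff_lt_mul hdpos).1 hq)
    have hc : ((j' i : ℝ) + 1) ≤ (j i : ℝ) * d := by exact_mod_cast h1
    have h3 : ((j' i : ℝ) + 1) * (s / 2 ^ k') ≤ ((j i : ℝ) * d) * (s / 2 ^ k') :=
      mul_le_mul_of_nonneg_right hc h'.le
    calc ((c i + j i * (s / 2 ^ k) + s / 2 ^ k) ⊓ (c i + j' i * (s / 2 ^ k') + s / 2 ^ k'))
        ≤ c i + j' i * (s / 2 ^ k') + s / 2 ^ k' := inf_le_right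
      _ ≤ c i + j i * (s / 2 ^ k) := by rw [hk2]; nlinarith [h3]
      _ ≤ ((c i + j i * (s / 2 ^ k)) ⊔ (c i + j' i * (s / 2 ^ k'))) := le_sup_left
  · have hq' : j i < j' i / d ∨ j i = j' i / d := by omega
    rcases hq' with hq' | hq'
    · -- (j i + 1) * d ≤ j' i : upper of I is below lower of I'
      have h1 : (j i + 1) * d ≤ j' i := (Nat.le_div_iff_mul_le hdpos).1 hq'
      have hc : ((j i : ℝ) + 1) * d ≤ (j' i : ℝ) := by exact_mod_cast h1
      have h3 : (((j i : ℝ) + 1) * d) * (s / 2 ^ k') ≤ (j' i : ℝ) * (s / 2 ^ k') :=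
        mul_le_mul_of_nonneg_right hc h'.le
      calc ((c i + j i * (s / 2 ^ k) + s / 2 ^ k) ⊓ (c i + j' i * (s / 2 ^ k') + s / 2 ^ k'))
          ≤ c i + j i * (s / 2 ^ k) + s / 2 ^ k := inf_le_left
        _ ≤ c i + j' i * (s / 2 ^ k') := by rw [hk2]; nlinarith [h3]
        _ ≤ ((c i + j i * (s / 2 ^ k)) ⊔ (c i + j' i * (s / 2 ^ k'))) := le_sup_right
    · exact absurd hq'.symm hi


/-- A dyadic cube is "bad" for `G` if more than half of its measure lies in `G`. -/
def bad (c : Fin n → ℝ) (s : ℝ) (hs : 0 < s) (G : Set (Fin n → ℝ)) (k : ℕ)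
    (j : Fin n → ℕ) : Prop :=
  volume (dyC c s hs k j).set < 2 * volume ((dyC c s hs k j).set ∩ G)

/-- The selected (maximal bad) dyadic cubes. -/
def sel (c : Fin n → ℝ) (s : ℝ) (hs : 0 < s) (G : Set (Fin n → ℝ)) :
    Set (ℕ × (Fin n → ℕ)) :=
  {p | (∀ i, p.2 i < 2 ^ p.1) ∧ bad c s hs G p.1 p.2 ∧
       ∀ m < p.1, ¬ bad c s hs G m (fun i => p.2 i / 2 ^ (p.1 - m))}

include hs in
lemma boundary_null (i : Fin n) :
    volume {y ∈ Icc c (fun i' => c i' + s) | y i = c i + s} = 0 := by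
  have hsub : {y ∈ Icc c (fun i' => c i' + s) | y i = c i + s} ⊆
      Icc (Function.update c i (c i + s)) (fun i' => c i' + s) := by
    rintro y ⟨⟨hy1, hy2⟩, hy3⟩
    refine ⟨fun i' => ?_, hy2⟩
    rcases eq_or_ne i' i with rfl | hne
    · rw [Function.update_self, hy3]
    · rw [Function.update_of_ne hne]; exact hy1 i'
  refine measure_mono_null hsub ?_
  rw [Real.volume_Icc_pi]
  apply Finset.prod_eq_zero (Finset.mem_univ i)
  simp

lemma cover (G : Set (Fin n → ℝ)) (hG : MeasurableSet G)
    (hGsub : G ⊆ Icc c (fun i => c i + s)) :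
    volume (G \ ⋃ p ∈ sel c s hs G, (dyC c s hs p.1 p.2).set) = 0 := by
  classical
  set U := ⋃ p ∈ sel c s hs G, (dyC c s hs p.1 p.2).set with hU
  have hdens := Besicovitch.ae_tendsto_measure_inter_div volume G
  set Dset := {x : Fin n → ℝ | Filter.Tendsto
    (fun r => volume (G ∩ Metric.closedBall x r) / volume (Metric.closedBall x r))
    (nhdsWithin 0 (Set.Ioi 0)) (nhds 1)} with hD
  have hDnull : volume (G \ Dset) = 0 := by
    have h1 := ae_iff.1 hdens
    rw [Measure.restrict_apply' hG] at h1
    refine measure_mono_null (fun y hy => ?_) h1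
    exact ⟨hy.2, hy.1⟩
  have hBd : volume (⋃ i : Fin n, {y ∈ Icc c (fun i' => c i' + s) | y i = c i + s}) = 0 :=
    measure_iUnion_null fun i => boundary_null c hs i
  refine measure_mono_null (fun x hx => ?_) (measure_union_null hDnull hBd)
  obtain ⟨hxG, hxU⟩ := hx
  by_contra hc
  simp only [Set.mem_union, not_or] at hc
  obtain ⟨hc1, hc2⟩ := hc
  have hxD : x ∈ Dset := by
    by_contra hxD
    exact hc1 ⟨hxG, hxD⟩
  simp only [Set.mem_iUnion, Set.mem_setOf_eq, not_exists, not_and] at hc2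
  have hlo : ∀ i, c i ≤ x i := fun i => (hGsub hxG).1 i
  have hhi : ∀ i, x i < c i + s := by
    intro i
    rcases lt_or_eq_of_le ((hGsub hxG).2 i) with h | h
    · exact h
    · exact absurd h (hc2 i (hGsub hxG))
  -- no dyadic cube containing x is bad
  have hnb : ∀ k, ¬ bad c s hs G k (dyJ c s k x) := by
    intro k hbadk
    have hex : ∃ k, bad c s hs G k (dyJ c s k x) := ⟨k, hbadk⟩
    apply hxU
    refine Set.mem_biUnion
      (?_ : (Nat.find hex, dyJ c s (Nat.find hex) x) ∈ sel c s hs G) ?_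
    · refine ⟨fun i => dyJ_lt hs hlo hhi _ i, Nat.find_spec hex, fun m hm hbadm => ?_⟩
      have heq : (fun i => dyJ c s (Nat.find hex) x i / 2 ^ (Nat.find hex - m))
          = dyJ c s m x := by
        funext i; exact (dyJ_anc hs hlo (le_of_lt hm) i).symm
      rw [heq] at hbadm
      exact Nat.find_min hex hm hbadm
    · exact mem_dyC hs hlo hhi _
  -- density contradiction
  have hseq : Filter.Tendsto (fun k : ℕ => s / 2 ^ k) Filter.atTop
      (nhdsWithin 0 (Set.Ioi 0)) := by
    rw [tendsto_nhdsWithin_iff]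
    constructor
    · have h0 : Filter.Tendsto (fun k : ℕ => s * (1/2 : ℝ) ^ k) Filter.atTop
          (nhds (s * 0)) :=
        Filter.Tendsto.const_mul s
          (_root_.tendsto_pow_atTop_nhds_zero_of_lt_one (by norm_num) (by norm_num))
      rw [mul_zero] at h0
      have heq : (fun k : ℕ => s * (1/2 : ℝ) ^ k) = fun k : ℕ => s / 2 ^ k := by
        funext k
        rw [one_div, inv_pow, div_eq_mul_inv]
      rwa [heq] at h0
    · exact Filter.Eventually.of_forall fun k => Set.mem_Ioi.2 (by positivity)
  have hcomp := hxD.comp hseq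
  have hub : ∀ k : ℕ, volume (G ∩ Metric.closedBall x (s / 2 ^ k)) /
      volume (Metric.closedBall x (s / 2 ^ k)) ≤ 1 - ((2:ℝ≥0∞) ^ (n+1))⁻¹ := by
    intro k
    have hp : (0:ℝ) < s / 2 ^ k := by positivity
    set C := (dyC c s hs k (dyJ c s k x)).set with hC
    have hxC : x ∈ C := mem_dyC hs hlo hhi k
    set v := volume C with hv
    have hvol : v = ENNReal.ofReal (s / 2 ^ k) ^ n := dyC_vol c hs k _
    have hw0 : ENNReal.ofReal (s / 2 ^ k) ≠ 0 := by
      simp only [ne_eq, ENNReal.ofReal_eq_zero, not_le]; exact hp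
    have hv0 : v ≠ 0 := by rw [hvol]; exact pow_ne_zero _ hw0
    have hvt : v ≠ ⊤ := by rw [hvol]; exact pow_ne_top ofReal_ne_top
    have hCB : C ⊆ Metric.closedBall x (s / 2 ^ k) := by
      intro y hy
      rw [Metric.mem_closedBall, dist_pi_le_iff hp.le]
      intro i
      rw [Real.dist_eq, abs_le]
      rw [hC, dyC_set] at hy
      obtain ⟨hy1, hy2⟩ := hy
      have hx1 : c i + (dyJ c s k x i) * (s / 2 ^ k) ≤ x i := by
        have := (mem_dyC hs hlo hhi k).1 i; exact this
      have hx2 : x i ≤ c i + (dyJ c s k x i) * (s / 2 ^ k) + s / 2 ^ k := by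
        have := (mem_dyC hs hlo hhi k).2 i; exact this
      have hyi1 := hy1 i
      have hyi2 := hy2 i
      simp only at hyi1 hyi2
      constructor <;> linarith
    have hB : volume (Metric.closedBall x (s / 2 ^ k)) = 2 ^ n * v := by
      have hIcc : Metric.closedBall x (s / 2 ^ k) =
          Icc (fun i => x i - s / 2 ^ k) (fun i => x i + s / 2 ^ k) := by
        rw [closedBall_pi _ hp.le, ← Set.pi_univ_Icc]
        exact congrArg (Set.pi Set.univ) (funext fun i => Real.closedBall_eq_Icc)
      rw [hIcc, Real.volume_Icc_pi, hvol]
      have h2 : ∀ i : Fin n, ENNReal.ofReal ((x i + s / 2 ^ k) - (x i - s / 2 ^ k)) =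
          2 * ENNReal.ofReal (s / 2 ^ k) := by
        intro i
        rw [show (x i + s / 2 ^ k) - (x i - s / 2 ^ k) = 2 * (s / 2 ^ k) by ring,
          ENNReal.ofReal_mul (by norm_num)]
        norm_num
      simp only [h2]
      rw [Finset.prod_const, Finset.card_univ, Fintype.card_fin, mul_pow]
    have hnbk := hnb k
    rw [bad, not_lt, ← hC, ← hv] at hnbk
    have hCGle : volume (C ∩ G) ≤ v / 2 := by
      rw [ENNReal.le_div_iff_mul_le (Or.inl two_ne_zero) (Or.inl ofNat_ne_top), mul_comm]
      exact hnbk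
    have hCGt : volume (C ∩ G) ≠ ⊤ :=
      (lt_of_le_of_lt (measure_mono Set.inter_subset_left) hvt.lt_top).ne
    have hdiff : v / 2 ≤ volume (C \ G) := by
      have hsplit : volume (C \ G) + volume (C ∩ G) = v := measure_diff_add_inter C hG
      have h1 : volume (C \ G) = v - volume (C ∩ G) := by
        rw [← hsplit, ENNReal.add_sub_cancel_right hCGt]
      rw [h1]
      calc v/2 = v - v/2 := (ENNReal.sub_half hvt).symm
      _ ≤ v - volume (C ∩ G) := tsub_le_tsub_left hCGle v
    set b := volume (Metric.closedBall x (s / 2 ^ k)) with hbdef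
    have hbt : b ≠ ⊤ := by rw [hB]; exact ENNReal.mul_ne_top (pow_ne_top ofNat_ne_top) hvt
    have hb0 : b ≠ 0 := by
      rw [hB]; exact mul_ne_zero (pow_ne_zero _ two_ne_zero) hv0
    have hGB : volume (G ∩ Metric.closedBall x (s / 2 ^ k)) ≤ b - v / 2 := by
      have hsub2 : G ∩ Metric.closedBall x (s / 2 ^ k) ⊆
          Metric.closedBall x (s / 2 ^ k) \ (C \ G) := by
        rintro y ⟨hyG, hyB⟩
        exact ⟨hyB, fun hyCG => hyCG.2 hyG⟩
      refine (measure_mono hsub2).trans ?_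
      have hCGsub : C \ G ⊆ Metric.closedBall x (s / 2 ^ k) :=
        (Set.diff_subset).trans hCB
      have hmd : volume (Metric.closedBall x (s / 2 ^ k) \ (C \ G)) =
          b - volume (C \ G) := by
        apply measure_diff hCGsub ((measurableSet_Icc.diff hG).nullMeasurableSet)
        · exact (lt_of_le_of_lt (measure_mono (Set.diff_subset)) hvt.lt_top).ne
      rw [hmd]
      exact tsub_le_tsub_left hdiff b
    have hεb : v / 2 / b = ((2:ℝ≥0∞) ^ (n+1))⁻¹ := by
      rw [hB, div_eq_mul_inv, div_eq_mul_inv,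
        ENNReal.mul_inv (Or.inl (pow_ne_zero _ two_ne_zero)) (Or.inl (pow_ne_top ofNat_ne_top)),
        pow_succ,
        ENNReal.mul_inv (Or.inl (pow_ne_zero _ two_ne_zero)) (Or.inl (pow_ne_top ofNat_ne_top))]
      calc v * 2⁻¹ * ((2 ^ n)⁻¹ * v⁻¹) = (v * v⁻¹) * ((2 ^ n)⁻¹ * 2⁻¹) := by ring
      _ = (2 ^ n)⁻¹ * 2⁻¹ := by rw [ENNReal.mul_inv_cancel hv0 hvt, one_mul]
    have hv2b : v / 2 ≤ b := by
      rw [hB]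
      calc v / 2 ≤ v := ENNReal.half_le_self
      _ ≤ 2 ^ n * v := le_mul_of_one_le_left (by positivity) (one_le_pow_of_one_le' (by norm_num : (1:ℝ≥0∞) ≤ 2) n)
    calc volume (G ∩ Metric.closedBall x (s / 2 ^ k)) / b
        ≤ (b - v / 2) / b := ENNReal.div_le_div_right hGB b
    _ ≤ 1 - ((2:ℝ≥0∞) ^ (n+1))⁻¹ := by
        rw [← hεb]
        refine ENNReal.le_sub_of_add_le_right ?_ ?_
        · exact (ENNReal.div_lt_top (ENNReal.div_lt_top hvt two_ne_zero).ne hb0).ne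
        rw [ENNReal.div_add_div_same, tsub_add_cancel_of_le hv2b, ENNReal.div_self hb0 hbt]
  have hle := le_of_tendsto hcomp (Filter.Eventually.of_forall hub)
  have hlt : (1:ℝ≥0∞) - ((2:ℝ≥0∞) ^ (n+1))⁻¹ < 1 :=
    ENNReal.sub_lt_self one_ne_top one_ne_zero (by simp)
  exact absurd hle (not_le.2 hlt)


section Rearr

variable {Q₀ : Cube n} {g : (Fin n → ℝ) → ℝ≥0∞}

lemma lt_meas_of_lt_rearr {t : ℝ} {A : ℝ≥0∞} (h : A < rearr Q₀ g t) :
    ENNReal.ofReal t < volume {x ∈ Q₀.set | A < g x} := by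
  by_contra hc
  exact absurd (sInf_le (not_lt.1 hc) : rearr Q₀ g t ≤ A) (not_le.2 h)

lemma meas_rearr_lt_le (Q₀ : Cube n) (g : (Fin n → ℝ) → ℝ≥0∞) (t : ℝ) :
    volume {x ∈ Q₀.set | rearr Q₀ g t < g x} ≤ ENNReal.ofReal t := by
  set A := rearr Q₀ g t with hA
  rcases eq_or_ne A ⊤ with htop | htop
  · have hemp : {x ∈ Q₀.set | A < g x} = ∅ := by
      ext y; simp [htop]
    simp [hemp]
  · have hbm : ∀ m : ℕ, ∃ b : ℝ≥0∞,
        (volume {x ∈ Q₀.set | b < g x} ≤ ENNReal.ofReal t) ∧ b < A + ((m:ℝ≥0∞))⁻¹ := by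
      intro m
      have h1 : A < A + ((m:ℝ≥0∞))⁻¹ :=
        ENNReal.lt_add_right htop (ENNReal.inv_ne_zero.2 (ENNReal.natCast_ne_top m))
      have h2 : sInf {a : ℝ≥0∞ |
          volume {x ∈ Q₀.set | a < g x} ≤ ENNReal.ofReal t} < A + ((m:ℝ≥0∞))⁻¹ := by
        rw [← rearr]; exact h1
      obtain ⟨b, hbS, hblt⟩ := sInf_lt_iff.1 h2
      exact ⟨b, hbS, hblt⟩
    choose b hb1 hb2 using hbm
    have hsub : {x ∈ Q₀.set | A < g x} ⊆ ⋃ m : ℕ, {x ∈ Q₀.set | b m < g x} := by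
      rintro x ⟨hxQ, hxA⟩
      rcases eq_or_ne (g x) ⊤ with hg | hg
      · refine Set.mem_iUnion.2 ⟨1, hxQ, ?_⟩
        rw [hg]
        calc b 1 < A + ((1:ℕ):ℝ≥0∞)⁻¹ := hb2 1
        _ < ⊤ := by
            rw [lt_top_iff_ne_top]
            exact ENNReal.add_ne_top.2 ⟨htop, by simp⟩
      · have hpos : g x - A ≠ 0 := by
          rw [ne_eq, tsub_eq_zero_iff_le, not_le]; exact hxA
        obtain ⟨k, hk⟩ := ENNReal.exists_inv_nat_lt hpos
        refine Set.mem_iUnion.2 ⟨k, hxQ, ?_⟩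
        have h3 : A + ((k:ℕ):ℝ≥0∞)⁻¹ ≤ g x := by
          calc A + ((k:ℕ):ℝ≥0∞)⁻¹ ≤ A + (g x - A) := add_le_add_right hk.le A
          _ = g x := add_tsub_cancel_of_le hxA.le
        exact (hb2 k).trans_le h3
    refine (measure_mono hsub).trans ?_
    have hdir : Directed (· ⊆ ·) (fun m : ℕ => {x ∈ Q₀.set | b m < g x}) := by
      intro m l
      rcases le_total (b m) (b l) with h | h
      · exact ⟨m, subset_rfl, fun x hx => ⟨hx.1, lt_of_le_of_lt h hx.2⟩⟩
      · exact ⟨l, fun x hx => ⟨hx.1, lt_of_le_of_lt h hx.2⟩, subset_rfl⟩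
    rw [hdir.measure_iUnion]
    exact iSup_le hb1

lemma rearr_le_div_add_one (hg : AEMeasurable g (volume.restrict Q₀.set)) {t : ℝ} (ht : 0 < t)
    (hI : (∫⁻ x in Q₀.set, g x) ≠ ⊤) :
    rearr Q₀ g t ≤ (∫⁻ x in Q₀.set, g x) / ENNReal.ofReal t + 1 := by
  have hτ : ENNReal.ofReal t ≠ 0 := by simp [ht]
  set I := ∫⁻ x in Q₀.set, g x with hIdef
  set A := I / ENNReal.ofReal t + 1 with hA
  have hA0 : A ≠ 0 := by simp [hA]
  have hAt : A ≠ ⊤ := by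
    rw [hA]
    exact ENNReal.add_ne_top.2 ⟨(ENNReal.div_lt_top hI hτ).ne, one_ne_top⟩
  apply sInf_le
  show volume {x ∈ Q₀.set | A < g x} ≤ ENNReal.ofReal t
  have hmeas : MeasurableSet Q₀.set := measurableSet_Icc
  have h1 : {x ∈ Q₀.set | A < g x} = {x | A < g x} ∩ Q₀.set := by
    ext y; simp [Set.mem_setOf_eq, and_comm]
  rw [h1, ← Measure.restrict_apply' hmeas]
  have h2 : volume.restrict Q₀.set {x | A < g x} ≤ volume.restrict Q₀.set {x | A ≤ g x} :=
    measure_mono fun y hy => Set.mem_setOf_eq ▸ le_of_lt hy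
  refine h2.trans ((meas_ge_le_lintegral_div hg hA0 hAt).trans ?_)
  apply ENNReal.div_le_of_le_mul
  rw [hA, mul_add, mul_one]
  calc I = ENNReal.ofReal t * (I / ENNReal.ofReal t) :=
      (ENNReal.mul_div_cancel hτ ofReal_ne_top).symm
  _ ≤ ENNReal.ofReal t * (I / ENNReal.ofReal t) + ENNReal.ofReal t := le_self_add

lemma rearr_anti (Q₀ : Cube n) (g : (Fin n → ℝ) → ℝ≥0∞) :
    Antitone (fun t => rearr Q₀ g t) := by
  intro t u h
  exact sInf_le_sInf fun a ha => le_trans ha (ENNReal.ofReal_le_ofReal h)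

end Rearr


end GR11


set_option maxHeartbeats 2000000 in
/-- Bennett–Sharpley inequality. There is `c > 0` depending only
on `n` such that for all `f ∈ L¹(Q₀)` and `0 < t < 1/6`:
`f**(t) - f*(t) ≤ c (f^#_{Q₀})*(t)`. -/
theorem garsia_rodemich_stmt11 (n : ℕ) :
    ∃ c : ℝ≥0∞, 0 < c ∧ c ≠ ⊤ ∧
      ∀ Q₀ : Cube n, volume Q₀.set = 1 →
        ∀ f : (Fin n → ℝ) → ℝ, IntegrableOn f Q₀.set volume →
          ∀ t ∈ Set.Ioo (0:ℝ) (1 / 6),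
            (∫⁻ u in Set.Ioo (0:ℝ) t, rearrF Q₀ f u) / ENNReal.ofReal t - rearrF Q₀ f t ≤
              c * rearr Q₀ (sharpMax Q₀ f) t := by
  classical
  have hc0 : (((2:ℝ≥0∞) ^ n + 2) * 4) ≠ 0 := by
    apply mul_ne_zero _ (by norm_num)
    intro h
    rw [add_eq_zero] at h
    exact (by norm_num : (2:ℝ≥0∞) ≠ 0) h.2
  refine ⟨((2:ℝ≥0∞) ^ n + 2) * 4, pos_iff_ne_zero.2 hc0, ?_, ?_⟩
  · exact ENNReal.mul_ne_top
      (ENNReal.add_ne_top.2 ⟨pow_ne_top ofNat_ne_top, by norm_num⟩) (by norm_num)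
  intro Q₀ hQvol f hf t ht
  obtain ⟨ht0, ht6⟩ := ht
  have hS₀meas : MeasurableSet Q₀.set := measurableSet_Icc
  set τ := ENNReal.ofReal t with hτdef
  have hτ0 : τ ≠ 0 := by simp [hτdef, ht0]
  have hτtop : τ ≠ ⊤ := ofReal_ne_top
  have hfaem : AEMeasurable f (volume.restrict Q₀.set) := hf.1.aemeasurable
  have habs : AEMeasurable (fun x => |f x|) (volume.restrict Q₀.set) := by
    simpa [Real.norm_eq_abs] using hf.1.norm.aemeasurable
  have hgaem : AEMeasurable (fun x => ENNReal.ofReal |f x|) (volume.restrict Q₀.set) :=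
    ENNReal.measurable_ofReal.comp_aemeasurable habs
  have hI : (∫⁻ x in Q₀.set, ENNReal.ofReal |f x|) ≠ ⊤ := by
    have h1 : (∫⁻ x in Q₀.set, ‖f x‖ₑ) < ⊤ := hf.2
    have heq : ∀ x, ENNReal.ofReal |f x| = ‖f x‖ₑ := by
      intro x
      rw [← ofReal_norm_eq_enorm, Real.norm_eq_abs]
    simp_rw [heq]
    exact h1.ne
  set a := rearr Q₀ (sharpMax Q₀ f) t with hadef
  rcases eq_or_ne a ⊤ with hatop | hatop
  · rw [hatop, ENNReal.mul_top hc0]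
    exact le_top
  set β := rearrF Q₀ f t with hβdef
  have hβg : β = rearr Q₀ (fun x => ENNReal.ofReal |f x|) t := rfl
  have hβtop : β ≠ ⊤ := by
    rw [hβg]
    refine ((GR11.rearr_le_div_add_one hgaem ht0 hI).trans_lt ?_).ne
    rw [lt_top_iff_ne_top]
    exact ENNReal.add_ne_top.2 ⟨(ENNReal.div_lt_top hI (by simp [ht0])).ne, one_ne_top⟩
  -- the exceptional sets
  set E : Set (Fin n → ℝ) := {x ∈ Q₀.set | β < ENNReal.ofReal |f x|} with hEdef
  set E₂ : Set (Fin n → ℝ) := {x ∈ Q₀.set | a < sharpMax Q₀ f x} with hE₂def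
  have hEm : volume E ≤ τ := by
    have := GR11.meas_rearr_lt_le Q₀ (fun x => ENNReal.ofReal |f x|) t
    simpa [hEdef, ← hβg] using this
  have hE₂m : volume E₂ ≤ τ := by
    have := GR11.meas_rearr_lt_le Q₀ (sharpMax Q₀ f) t
    simpa [hE₂def, ← hadef] using this
  set G : Set (Fin n → ℝ) := E ∪ E₂ with hGdef
  have hGsub : G ⊆ Q₀.set := by
    rintro x (hx | hx) <;> exact hx.1
  set G' : Set (Fin n → ℝ) := toMeasurable volume G ∩ Q₀.set with hG'def
  have hG'meas : MeasurableSet G' := (measurableSet_toMeasurable _ _).inter hS₀meas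
  have hGG' : G ⊆ G' := Set.subset_inter (subset_toMeasurable _ _) hGsub
  have hG'm : volume G' ≤ τ + τ := by
    calc volume G' ≤ volume (toMeasurable volume G) := measure_mono Set.inter_subset_left
    _ = volume G := measure_toMeasurable _
    _ ≤ volume E + volume E₂ := measure_union_le _ _
    _ ≤ τ + τ := add_le_add hEm hE₂m
  have hnotG' : ∀ x ∈ Q₀.set, x ∉ G' →
      ENNReal.ofReal |f x| ≤ β ∧ sharpMax Q₀ f x ≤ a := by
    intro x hxS hxG'
    have hxG : x ∉ G := fun hc => hxG' (hGG' hc)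
    constructor
    · by_contra hc
      exact hxG (Or.inl ⟨hxS, not_le.1 hc⟩)
    · by_contra hc
      exact hxG (Or.inr ⟨hxS, not_le.1 hc⟩)
  -- dyadic machinery
  set c' := Q₀.corner with hc'def
  have hs := Q₀.side_pos
  have hS₀Icc : Q₀.set = Icc c' (fun i => c' i + Q₀.side) := rfl
  have hG'S₀ : G' ⊆ Icc c' (fun i => c' i + Q₀.side) := by
    rw [← hS₀Icc]; exact Set.inter_subset_right
  have hcov := GR11.cover c' hs G' hG'meas hG'S₀
  set Sel := GR11.sel c' Q₀.side hs G' with hSeldef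
  -- the root cube is not bad
  have hτ16 : τ ≤ ENNReal.ofReal (1/6) := ofReal_le_ofReal ht6.le
  have hroot : ¬ GR11.bad c' Q₀.side hs G' 0 (fun _ => 0) := by
    rw [GR11.bad, not_lt]
    have h1 : (GR11.dyC c' Q₀.side hs 0 (fun _ => 0)).set = Q₀.set := by
      rw [GR11.dyC_zero_set, hS₀Icc]
    rw [h1, hQvol]
    calc 2 * volume (Q₀.set ∩ G') ≤ 2 * (τ + τ) :=
        mul_le_mul_right ((measure_mono Set.inter_subset_right).trans hG'm) 2
    _ ≤ 2 * (ENNReal.ofReal (1/6) + ENNReal.ofReal (1/6)) := by gcongr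
    _ = ENNReal.ofReal (2 * (1/6 + 1/6)) := by
        rw [← ENNReal.ofReal_add (by norm_num) (by norm_num),
          ENNReal.ofReal_mul (by norm_num)]
        norm_num
    _ ≤ 1 := by
        rw [← ENNReal.ofReal_one]
        exact ofReal_le_ofReal (by norm_num)
  have hkpos : ∀ p : ℕ × (Fin n → ℕ), p ∈ Sel → 1 ≤ p.1 := by
    rintro ⟨k, j⟩ hp
    by_contra hk
    have hk0 : k = 0 := by omega
    subst hk0
    have hj : j = fun _ => 0 := funext fun i => by have h := hp.1 i; simp at h; omega
    rw [hj] at hp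
    exact hroot hp.2.1
  -- per-cube estimate
  have key : ∀ p : ℕ × (Fin n → ℕ), p ∈ Sel →
      (∫⁻ x in (GR11.dyC c' Q₀.side hs p.1 p.2).set, (ENNReal.ofReal |f x| - β)) ≤
        ((2:ℝ≥0∞) ^ n + 2) * a * volume (GR11.dyC c' Q₀.side hs p.1 p.2).set := by
    rintro ⟨k, j⟩ hp
    have hk1 : 1 ≤ k := hkpos _ hp
    obtain ⟨hbound, hbad, hanc⟩ := hp
    dsimp only at hbound hbad hanc
    set P := GR11.dyC c' Q₀.side hs (k-1) (fun i => j i / 2) with hPdef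
    have hSP : (GR11.dyC c' Q₀.side hs k j).set ⊆ P.set := by
      have h := GR11.dyC_parent c' hs (k-1) j
      rwa [Nat.sub_add_cancel hk1] at h
    have hPsub : P.set ⊆ Q₀.set := by
      rw [hS₀Icc]
      apply GR11.dyC_subset
      intro i
      have h1 := hbound i
      have h2 : (2:ℕ) ^ k = 2 ^ (k-1) * 2 := by rw [← pow_succ]; congr 1; omega
      rw [Nat.div_lt_iff_lt_mul (by norm_num)]
      omega
    have hPnb : ¬ GR11.bad c' Q₀.side hs G' (k-1) (fun i => j i / 2) := by
      have h1 := hanc (k-1) (by omega)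
      have h2 : k - (k-1) = 1 := by omega
      rw [h2] at h1
      simpa using h1
    set v := volume (GR11.dyC c' Q₀.side hs k j).set with hvdef
    set vP := volume P.set with hvPdef
    have hv : v = ENNReal.ofReal (Q₀.side / 2 ^ k) ^ n := GR11.dyC_vol c' hs k j
    have hvP : vP = ENNReal.ofReal (Q₀.side / 2 ^ (k-1)) ^ n := GR11.dyC_vol c' hs (k-1) _
    have hw0 : ∀ m : ℕ, ENNReal.ofReal (Q₀.side / 2 ^ m) ≠ 0 := fun m => by
      simp only [ne_eq, ENNReal.ofReal_eq_zero, not_le]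
      positivity
    have hvP0 : vP ≠ 0 := hvP ▸ pow_ne_zero _ (hw0 _)
    have hvPt : vP ≠ ⊤ := hvP ▸ pow_ne_top ofReal_ne_top
    have hvPv : vP = 2 ^ n * v := by
      rw [hvP, hv]
      have h2 : (2:ℝ) ^ k = 2 ^ (k-1) * 2 := by rw [← pow_succ]; congr 1; omega
      have hss : Q₀.side / 2 ^ (k-1) = 2 * (Q₀.side / 2 ^ k) := by
        rw [h2]; field_simp
      rw [hss, ENNReal.ofReal_mul (by norm_num), mul_pow]
      norm_num
    have hPnb' : 2 * volume (P.set ∩ G') ≤ vP := not_lt.1 hPnb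
    have hPGle : volume (P.set ∩ G') ≤ vP / 2 := by
      rw [ENNReal.le_div_iff_mul_le (Or.inl two_ne_zero) (Or.inl ofNat_ne_top), mul_comm]
      exact hPnb'
    have hPdiff : vP / 2 ≤ volume (P.set \ G') := by
      have hsplit := measure_diff_add_inter (μ := volume) P.set hG'meas
      have hPGt : volume (P.set ∩ G') ≠ ⊤ :=
        ((measure_mono Set.inter_subset_left).trans_lt hvPt.lt_top).ne
      have h1 : volume (P.set \ G') = vP - volume (P.set ∩ G') := by
        rw [hvPdef, ← hsplit, ENNReal.add_sub_cancel_right hPGt]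
      rw [h1]
      calc vP/2 = vP - vP/2 := (ENNReal.sub_half hvPt).symm
      _ ≤ vP - volume (P.set ∩ G') := tsub_le_tsub_left hPGle vP
    obtain ⟨x₀, hx₀⟩ : (P.set \ G').Nonempty := by
      apply nonempty_of_measure_ne_zero
      intro h0
      rw [h0, le_zero_iff] at hPdiff
      rcases ENNReal.div_eq_zero_iff.1 hPdiff with h | h
      · exact hvP0 h
      · exact ofNat_ne_top h
    have hx₀S : x₀ ∈ Q₀.set := hPsub hx₀.1
    have hsharp := (hnotG' x₀ hx₀S hx₀.2).2
    have hosc : oscAvg f P ≤ a := by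
      refine le_trans ?_ hsharp
      have hmem : P ∈ subcubesAt Q₀ x₀ := ⟨hPsub, hx₀.1⟩
      exact le_biSup _ hmem
    have hintP : (∫⁻ x in P.set, ENNReal.ofReal |f x - cubeAvg f P|) = oscAvg f P * vP := by
      rw [oscAvg]
      exact (ENNReal.div_mul_cancel hvP0 hvPt).symm
    have hintPle : (∫⁻ x in P.set, ENNReal.ofReal |f x - cubeAvg f P|) ≤ a * vP := by
      rw [hintP]
      exact mul_le_mul_left hosc _
    set mP := ENNReal.ofReal |cubeAvg f P| with hmPdef
    have hmPβ : mP - β ≤ 2 * a := by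
      have hc0' : vP/2 ≠ 0 := by
        simp only [ne_eq, ENNReal.div_eq_zero_iff, not_or]
        exact ⟨hvP0, ofNat_ne_top⟩
      have hct : vP/2 ≠ ⊤ := (ENNReal.div_lt_top hvPt two_ne_zero).ne
      have hstep : (mP - β) * (vP / 2) ≤ (2 * a) * (vP / 2) := by
        have h2v : (2 * a) * (vP / 2) = a * vP := by
          have h3 : 2 * (vP / 2) = vP := ENNReal.mul_div_cancel two_ne_zero ofNat_ne_top
          calc (2 * a) * (vP / 2) = a * (2 * (vP / 2)) := by ring
          _ = a * vP := by rw [h3]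
        calc (mP - β) * (vP / 2) ≤ (mP - β) * volume (P.set \ G') :=
            mul_le_mul_right hPdiff _
        _ = ∫⁻ _x in P.set \ G', (mP - β) := (setLIntegral_const _ _).symm
        _ ≤ ∫⁻ x in P.set \ G', ENNReal.ofReal |f x - cubeAvg f P| := by
            apply setLIntegral_mono' (measurableSet_Icc.diff hG'meas)
            intro x hx
            have hxS : x ∈ Q₀.set := hPsub hx.1
            have hgx : ENNReal.ofReal |f x| ≤ β := (hnotG' x hxS hx.2).1
            have htri : mP ≤ ENNReal.ofReal |f x - cubeAvg f P| + ENNReal.ofReal |f x| := by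
              rw [hmPdef, ← ENNReal.ofReal_add (abs_nonneg _) (abs_nonneg _)]
              apply ENNReal.ofReal_le_ofReal
              have h4 := abs_sub_abs_le_abs_sub (cubeAvg f P) (f x)
              have h5 : |cubeAvg f P - f x| = |f x - cubeAvg f P| := abs_sub_comm _ _
              linarith
            exact tsub_le_iff_right.2 (htri.trans (add_le_add_right hgx _))
        _ ≤ ∫⁻ x in P.set, ENNReal.ofReal |f x - cubeAvg f P| :=
            lintegral_mono_set Set.diff_subset
        _ ≤ a * vP := hintPle
        _ = (2 * a) * (vP / 2) := h2v.symm
      exact (ENNReal.mul_le_mul_iff_left hc0' hct).1 hstep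
    have hpt : ∀ x, ENNReal.ofReal |f x| - β ≤
        ENNReal.ofReal |f x - cubeAvg f P| + (mP - β) := by
      intro x
      have htri : ENNReal.ofReal |f x| ≤ ENNReal.ofReal |f x - cubeAvg f P| + mP := by
        rw [hmPdef, ← ENNReal.ofReal_add (abs_nonneg _) (abs_nonneg _)]
        apply ENNReal.ofReal_le_ofReal
        have h4 := abs_sub_abs_le_abs_sub (f x) (cubeAvg f P)
        linarith
      calc ENNReal.ofReal |f x| - β
          ≤ (ENNReal.ofReal |f x - cubeAvg f P| + mP) - β := tsub_le_tsub_right htri β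
      _ ≤ ENNReal.ofReal |f x - cubeAvg f P| + (mP - β) := add_tsub_le_assoc
    calc (∫⁻ x in (GR11.dyC c' Q₀.side hs k j).set, (ENNReal.ofReal |f x| - β))
        ≤ ∫⁻ x in (GR11.dyC c' Q₀.side hs k j).set,
            (ENNReal.ofReal |f x - cubeAvg f P| + (mP - β)) := lintegral_mono fun x => hpt x
    _ = (∫⁻ x in (GR11.dyC c' Q₀.side hs k j).set, ENNReal.ofReal |f x - cubeAvg f P|)
          + (mP - β) * v := by
        rw [lintegral_add_right _ measurable_const]
        congr 1
        exact setLIntegral_const _ _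
    _ ≤ a * vP + (2 * a) * v :=
        add_le_add ((lintegral_mono_set hSP).trans hintPle) (mul_le_mul_left hmPβ v)
    _ = ((2:ℝ≥0∞) ^ n + 2) * a * v := by
        rw [hvPv]; ring
  -- summing over the selected cubes
  set T := ∫⁻ x in Q₀.set, (ENNReal.ofReal |f x| - β) with hTdef
  set U := ⋃ p ∈ Sel, (GR11.dyC c' Q₀.side hs p.1 p.2).set with hUdef
  have hTsum : T ≤ ∑' p : Sel,
      ∫⁻ x in (GR11.dyC c' Q₀.side hs (p : ℕ × (Fin n → ℕ)).1
        (p : ℕ × (Fin n → ℕ)).2).set, (ENNReal.ofReal |f x| - β) := by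
    have hzero : (∫⁻ x in Q₀.set \ G', (ENNReal.ofReal |f x| - β)) = 0 := by
      have hle : (∫⁻ x in Q₀.set \ G', (ENNReal.ofReal |f x| - β)) ≤
          ∫⁻ _x in Q₀.set \ G', (0:ℝ≥0∞) := by
        apply setLIntegral_mono' (hS₀meas.diff hG'meas)
        intro x hx
        have := (hnotG' x hx.1 hx.2).1
        simpa [tsub_eq_zero_iff_le] using this
      simpa using hle
    have hsplit : T ≤ (∫⁻ x in G', (ENNReal.ofReal |f x| - β)) := by
      have h1 : T = (∫⁻ x in Q₀.set ∩ G', (ENNReal.ofReal |f x| - β))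
          + ∫⁻ x in Q₀.set \ G', (ENNReal.ofReal |f x| - β) :=
        (lintegral_inter_add_diff _ _ hG'meas).symm
      rw [h1, hzero, add_zero]
      have h2 : Q₀.set ∩ G' = G' := Set.inter_eq_self_of_subset_right Set.inter_subset_right
      rw [h2]
    refine hsplit.trans ?_
    have hG'split : G' ⊆ (U ∩ G') ∪ (G' \ U) := by
      intro x hx
      by_cases hxU : x ∈ U
      · exact Or.inl ⟨hxU, hx⟩
      · exact Or.inr ⟨hx, hxU⟩
    calc (∫⁻ x in G', (ENNReal.ofReal |f x| - β))
        ≤ ∫⁻ x in (U ∩ G') ∪ (G' \ U), (ENNReal.ofReal |f x| - β) :=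
          lintegral_mono_set hG'split
    _ ≤ (∫⁻ x in U ∩ G', (ENNReal.ofReal |f x| - β))
          + ∫⁻ x in G' \ U, (ENNReal.ofReal |f x| - β) := lintegral_union_le _ _ _
    _ ≤ (∫⁻ x in U, (ENNReal.ofReal |f x| - β)) + 0 := by
        apply add_le_add (lintegral_mono_set Set.inter_subset_left)
        rw [setLIntegral_measure_zero _ _ hcov]
    _ = ∫⁻ x in ⋃ p : Sel, (GR11.dyC c' Q₀.side hs (p : ℕ × (Fin n → ℕ)).1
          (p : ℕ × (Fin n → ℕ)).2).set, (ENNReal.ofReal |f x| - β) := by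
        rw [add_zero, hUdef, Set.biUnion_eq_iUnion]
    _ ≤ _ := lintegral_iUnion_le _ _
  -- total volume of selected cubes
  have hdisjnull : ∀ p q : ℕ × (Fin n → ℕ), p ∈ Sel → q ∈ Sel → p ≠ q →
      volume ((GR11.dyC c' Q₀.side hs p.1 p.2).set ∩
        (GR11.dyC c' Q₀.side hs q.1 q.2).set) = 0 := by
    have main : ∀ (k k' : ℕ) (j j' : Fin n → ℕ), k ≤ k' → ((k,j) ∈ Sel) → ((k',j') ∈ Sel) →
        ((k,j) : ℕ × (Fin n → ℕ)) ≠ (k',j') →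
        volume ((GR11.dyC c' Q₀.side hs k j).set ∩ (GR11.dyC c' Q₀.side hs k' j').set) = 0 := by
      intro k k' j j' hkk hpS hqS hne
      apply GR11.dyC_inter_null c' hs hkk
      intro heq
      rcases eq_or_lt_of_le hkk with rfl | hlt
      · apply hne
        have hj : j' = j := by
          funext i
          have := congrFun heq i
          simpa using this
        rw [hj]
      · exact (heq ▸ hqS.2.2 k hlt) hpS.2.1
    intro p q hp hq hne
    rcases le_total p.1 q.1 with h | h
    · exact main p.1 q.1 p.2 q.2 h hp hq (by simpa using hne)
    · rw [Set.inter_comm]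
      exact main q.1 p.1 q.2 p.2 h hq hp (by simpa using hne.symm)
  have hvols : (∑' p : Sel, volume (GR11.dyC c' Q₀.side hs (p : ℕ × (Fin n → ℕ)).1
      (p : ℕ × (Fin n → ℕ)).2).set) ≤ 2 * (τ + τ) := by
    have h1 : ∀ p : Sel, volume (GR11.dyC c' Q₀.side hs (p : ℕ × (Fin n → ℕ)).1
        (p : ℕ × (Fin n → ℕ)).2).set ≤
        2 * volume ((GR11.dyC c' Q₀.side hs (p : ℕ × (Fin n → ℕ)).1
          (p : ℕ × (Fin n → ℕ)).2).set ∩ G') := by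
      rintro ⟨⟨k, j⟩, hp⟩
      exact le_of_lt hp.2.1
    calc (∑' p : Sel, volume (GR11.dyC c' Q₀.side hs (p : ℕ × (Fin n → ℕ)).1
        (p : ℕ × (Fin n → ℕ)).2).set)
        ≤ ∑' p : Sel, 2 * volume ((GR11.dyC c' Q₀.side hs (p : ℕ × (Fin n → ℕ)).1
            (p : ℕ × (Fin n → ℕ)).2).set ∩ G') := ENNReal.tsum_le_tsum h1
    _ = 2 * ∑' p : Sel, volume ((GR11.dyC c' Q₀.side hs (p : ℕ × (Fin n → ℕ)).1
          (p : ℕ × (Fin n → ℕ)).2).set ∩ G') := ENNReal.tsum_mul_left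
    _ ≤ 2 * (τ + τ) := by
        apply mul_le_mul_right
        have hdisj : Pairwise (fun p q : Sel =>
            AEDisjoint volume
              ((GR11.dyC c' Q₀.side hs (p : ℕ × (Fin n → ℕ)).1
                (p : ℕ × (Fin n → ℕ)).2).set ∩ G')
              ((GR11.dyC c' Q₀.side hs (q : ℕ × (Fin n → ℕ)).1
                (q : ℕ × (Fin n → ℕ)).2).set ∩ G')) := by
          intro p q hne
          have hne' : (p : ℕ × (Fin n → ℕ)) ≠ (q : ℕ × (Fin n → ℕ)) :=
            fun h => hne (Subtype.ext h)
          refine measure_mono_null ?_ (hdisjnull _ _ p.2 q.2 hne')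
          exact Set.inter_subset_inter Set.inter_subset_left Set.inter_subset_left
        have hnm : ∀ p : Sel, NullMeasurableSet
            ((GR11.dyC c' Q₀.side hs (p : ℕ × (Fin n → ℕ)).1
              (p : ℕ × (Fin n → ℕ)).2).set ∩ G') volume :=
          fun p => (measurableSet_Icc.inter hG'meas).nullMeasurableSet
        rw [← measure_iUnion₀ hdisj hnm]
        exact (measure_mono (Set.iUnion_subset fun p => Set.inter_subset_right)).trans hG'm
  have hTle : T ≤ (((2:ℝ≥0∞) ^ n + 2) * 4 * a) * τ := by
    calc T ≤ ∑' p : Sel, ∫⁻ x in (GR11.dyC c' Q₀.side hs (p : ℕ × (Fin n → ℕ)).1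
        (p : ℕ × (Fin n → ℕ)).2).set, (ENNReal.ofReal |f x| - β) := hTsum
    _ ≤ ∑' p : Sel, ((2:ℝ≥0∞) ^ n + 2) * a *
          volume (GR11.dyC c' Q₀.side hs (p : ℕ × (Fin n → ℕ)).1
            (p : ℕ × (Fin n → ℕ)).2).set :=
        ENNReal.tsum_le_tsum fun p => key _ p.2
    _ = ((2:ℝ≥0∞) ^ n + 2) * a * ∑' p : Sel,
          volume (GR11.dyC c' Q₀.side hs (p : ℕ × (Fin n → ℕ)).1
            (p : ℕ × (Fin n → ℕ)).2).set := ENNReal.tsum_mul_left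
    _ ≤ ((2:ℝ≥0∞) ^ n + 2) * a * (2 * (τ + τ)) := mul_le_mul_right hvols _
    _ = (((2:ℝ≥0∞) ^ n + 2) * 4 * a) * τ := by ring
  -- step 2 : ∫₀ᵗ f* ≤ T + β τ
  have hstep2 : (∫⁻ u in Set.Ioo (0:ℝ) t, rearrF Q₀ f u) ≤ T + β * τ := by
    have hanti : Antitone (rearrF Q₀ f) := GR11.rearr_anti Q₀ _
    set ψ : ℝ → ℝ≥0∞ := fun u => rearrF Q₀ f u - β with hψdef
    have hψanti : Antitone ψ := fun u v huv => tsub_le_tsub_right (hanti huv) β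
    have hψmeas : Measurable ψ := hψanti.measurable
    have hψfin : ∀ u ∈ Set.Ioo (0:ℝ) t, ψ u ≠ ⊤ := by
      intro u hu hc
      have h1 : rearrF Q₀ f u ≠ ⊤ := by
        refine ((GR11.rearr_le_div_add_one hgaem hu.1 hI).trans_lt ?_).ne
        rw [lt_top_iff_ne_top]
        exact ENNReal.add_ne_top.2 ⟨(ENNReal.div_lt_top hI (by simp [hu.1])).ne, one_ne_top⟩
      exact h1 (top_le_iff.1 (hc ▸ (tsub_le_self : ψ u ≤ rearrF Q₀ f u)))
    set βr := β.toReal with hβrdef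
    have hββr : β = ENNReal.ofReal βr := (ENNReal.ofReal_toReal hβtop).symm
    have hφaem : AEMeasurable (fun x => max (|f x| - βr) 0) (volume.restrict Q₀.set) :=
      (habs.sub aemeasurable_const).max aemeasurable_const
    have hT2 : T = ∫⁻ l in Set.Ioi (0:ℝ),
        volume.restrict Q₀.set {x | l < max (|f x| - βr) 0} := by
      have heq : ∀ x, ENNReal.ofReal |f x| - β = ENNReal.ofReal (max (|f x| - βr) 0) := by
        intro x
        rw [hββr, ← ENNReal.ofReal_sub _ ENNReal.toReal_nonneg]
        rcases le_total (|f x| - βr) 0 with h | h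
        · rw [max_eq_right h, ENNReal.ofReal_eq_zero.2 h, ENNReal.ofReal_zero]
        · rw [max_eq_left h]
      rw [hTdef]
      simp_rw [heq]
      exact lintegral_eq_lintegral_meas_lt (volume.restrict Q₀.set)
        (Filter.Eventually.of_forall fun x => le_max_right _ _) hφaem
    have hψint : (∫⁻ u in Set.Ioo (0:ℝ) t, ψ u) = ∫⁻ l in Set.Ioi (0:ℝ),
        volume.restrict (Set.Ioo (0:ℝ) t) {u | l < (ψ u).toReal} := by
      have heq2 : ∀ᵐ u ∂(volume.restrict (Set.Ioo (0:ℝ) t)),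
          ψ u = ENNReal.ofReal ((ψ u).toReal) := by
        filter_upwards [ae_restrict_mem measurableSet_Ioo] with u hu
        rw [ENNReal.ofReal_toReal (hψfin u hu)]
      rw [lintegral_congr_ae heq2]
      exact lintegral_eq_lintegral_meas_lt _
        (Filter.Eventually.of_forall fun u => ENNReal.toReal_nonneg)
        hψmeas.ennreal_toReal.aemeasurable
    have hcompare : ∀ l : ℝ, 0 < l →
        volume.restrict (Set.Ioo (0:ℝ) t) {u | l < (ψ u).toReal} ≤
        volume.restrict Q₀.set {x | l < max (|f x| - βr) 0} := by
      intro l hl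
      rw [Measure.restrict_apply' measurableSet_Ioo, Measure.restrict_apply' hS₀meas]
      set D := volume {x ∈ Q₀.set | β + ENNReal.ofReal l < ENNReal.ofReal |f x|} with hDdef
      have hDle : D ≤ volume ({x | l < max (|f x| - βr) 0} ∩ Q₀.set) := by
        apply measure_mono
        rintro x ⟨hxS, hxl⟩
        refine ⟨?_, hxS⟩
        have h1 : ENNReal.ofReal (βr + l) < ENNReal.ofReal (|f x|) := by
          rw [ENNReal.ofReal_add ENNReal.toReal_nonneg hl.le, ← hββr]
          exact hxl
        have h2 : βr + l < |f x| := by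
          by_contra hcon
          exact absurd (ENNReal.ofReal_le_ofReal (not_lt.1 hcon)) (not_le.2 h1)
        show l < max (|f x| - βr) 0
        exact lt_max_iff.2 (Or.inl (by linarith))
      refine le_trans ?_ hDle
      rcases eq_or_ne D ⊤ with hDtop | hDtop
      · rw [hDtop]; exact le_top
      have hsub : {u | l < (ψ u).toReal} ∩ Set.Ioo (0:ℝ) t ⊆ Set.Ioo 0 D.toReal := by
        rintro u ⟨hu1, hu2⟩
        have hψu : ENNReal.ofReal l < ψ u :=
          (ENNReal.ofReal_lt_iff_lt_toReal hl.le (hψfin u hu2)).2 hu1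
        have hru : β + ENNReal.ofReal l < rearrF Q₀ f u := lt_tsub_iff_left.1 hψu
        have hD : ENNReal.ofReal u < D := GR11.lt_meas_of_lt_rearr hru
        have hu3 : u < D.toReal :=
          (ENNReal.ofReal_lt_iff_lt_toReal hu2.1.le hDtop).1 hD
        exact ⟨hu2.1, hu3⟩
      calc volume ({u | l < (ψ u).toReal} ∩ Set.Ioo (0:ℝ) t)
          ≤ volume (Set.Ioo (0:ℝ) D.toReal) := measure_mono hsub
      _ = ENNReal.ofReal (D.toReal - 0) := Real.volume_Ioo
      _ ≤ D := by rw [sub_zero]; exact ofReal_toReal_le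
    calc (∫⁻ u in Set.Ioo (0:ℝ) t, rearrF Q₀ f u)
        ≤ ∫⁻ u in Set.Ioo (0:ℝ) t, (ψ u + β) := lintegral_mono fun u => le_tsub_add
    _ = (∫⁻ u in Set.Ioo (0:ℝ) t, ψ u) + β * volume (Set.Ioo (0:ℝ) t) := by
        rw [lintegral_add_right _ measurable_const]
        congr 1
        exact setLIntegral_const _ _
    _ = (∫⁻ u in Set.Ioo (0:ℝ) t, ψ u) + β * τ := by
        rw [Real.volume_Ioo, sub_zero, hτdef]
    _ ≤ T + β * τ := by
        apply add_le_add_left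
        rw [hψint, hT2]
        apply lintegral_mono_ae
        filter_upwards [ae_restrict_mem measurableSet_Ioi] with l hl
        exact hcompare l hl
  -- final assembly
  have hNle : (∫⁻ u in Set.Ioo (0:ℝ) t, rearrF Q₀ f u) ≤
      ((((2:ℝ≥0∞) ^ n + 2) * 4 * a) + β) * τ := by
    calc (∫⁻ u in Set.Ioo (0:ℝ) t, rearrF Q₀ f u) ≤ T + β * τ := hstep2
    _ ≤ (((2:ℝ≥0∞) ^ n + 2) * 4 * a) * τ + β * τ := add_le_add_left hTle _
    _ = ((((2:ℝ≥0∞) ^ n + 2) * 4 * a) + β) * τ := (add_mul _ _ _).symm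
  calc (∫⁻ u in Set.Ioo (0:ℝ) t, rearrF Q₀ f u) / τ - β
      ≤ (((((2:ℝ≥0∞) ^ n + 2) * 4 * a) + β) * τ) / τ - β :=
        tsub_le_tsub_right (ENNReal.div_le_div_right hNle τ) β
  _ = ((((2:ℝ≥0∞) ^ n + 2) * 4 * a) + β) - β := by
      rw [mul_div_assoc, ENNReal.div_self hτ0 hτtop, mul_one]
  _ = (((2:ℝ≥0∞) ^ n + 2) * 4) * a := by
      rw [ENNReal.add_sub_cancel_right hβtop, mul_assoc]
  _ ≤ (((2:ℝ≥0∞) ^ n + 2) * 4) * a := le_rfl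


end
end
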